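/- arXiv:1302.3859 — 5 statements merged into one kernel-verified Lean document; each statement's English description precedes it below -/
import Mathlib

section
/- Let λ = (λ_1 ≤ … ≤ λ_d) ∈ ℝ_{≥0}^d be non-decreasing, let a = (a_1,…,a_k) ∈ ℝ_{>0}^k with k ≥ d, and let r ∈ {1,…,d}. Then: (1) if r < d and Q_r < λ_{r+1}, then Q_r < Q_j for every j with r < j ≤ d; (2) if r < d and Q_r ≤ λ_{r+1}, then Q_r ≤ Q_j for every j with r < j ≤ d; (3) if λ_r ≤ Q_r, then Q_r ≤ Q_j for every j with 1 ≤ j < r. -/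
open Finset
open scoped ComplexOrder

noncomputable def sortAsc {m : ℕ} (x : Fin m → ℝ) : Fin m → ℝ :=
  x ∘ Tuple.sort x

noncomputable def sortDesc {m : ℕ} (x : Fin m → ℝ) : Fin m → ℝ :=
  fun i => (x ∘ Tuple.sort x) i.rev

noncomputable def pad {k : ℕ} (x : Fin k → ℝ) (m : ℕ) : Fin m → ℝ :=
  fun i => if h : (i : ℕ) < k then x ⟨i, h⟩ else 0

/-- `MajorizedBy x y` means `x ≺ y`. -/
def MajorizedBy {m : ℕ} (x y : Fin m → ℝ) : Prop :=
  (∀ j : Fin m, ∑ i ∈ Finset.Iic j, sortDesc x i ≤ ∑ i ∈ Finset.Iic j, sortDesc y i) ∧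
    ∑ i, x i = ∑ i, y i

/-- Majorization of vectors of possibly different lengths, padding with zeros. -/
def MajorizedByPad {k m : ℕ} (x : Fin k → ℝ) (y : Fin m → ℝ) : Prop :=
  MajorizedBy (pad x (max k m)) (pad y (max k m))

/-- The frame operator `S_F = ∑ f_i f_i^*` of a finite sequence of vectors in `ℂ^d`. -/
noncomputable def frameOp {d n : ℕ} (F : Fin n → Fin d → ℂ) : Matrix (Fin d) (Fin d) ℂ :=
  ∑ l, Matrix.vecMulVec (F l) (star (F l))

/-- The squared norm `‖g‖²` of a vector in `ℂ^d`. -/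
noncomputable def normSqVec {d : ℕ} (g : Fin d → ℂ) : ℝ :=
  ∑ i, Complex.normSq (g i)

open scoped Classical in
/-- Eigenvalues of a (Hermitian) matrix arranged in decreasing order. -/
noncomputable def eigsDesc {d : ℕ} (S : Matrix (Fin d) (Fin d) ℂ) : Fin d → ℝ :=
  if h : S.IsHermitian then sortDesc h.eigenvalues else 0

open scoped Classical in
/-- Eigenvalues of a (Hermitian) matrix arranged in increasing order. -/
noncomputable def eigsAsc {d : ℕ} (S : Matrix (Fin d) (Fin d) ℂ) : Fin d → ℝ :=
  if h : S.IsHermitian then sortAsc h.eigenvalues else 0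

/-- `Γ_d(a)`: non-increasing nonnegative vectors in `ℝ^d` majorizing `a`. -/
def Gamma {k : ℕ} (d : ℕ) (a : Fin k → ℝ) : Set (Fin d → ℝ) :=
  {μ | Antitone μ ∧ (∀ i, 0 ≤ μ i) ∧ MajorizedByPad a μ}

/-- The convex potential `P_f = tr f(S) = ∑ f(λ_i(S))`. -/
noncomputable def potential {d : ℕ} (f : ℝ → ℝ) (S : Matrix (Fin d) (Fin d) ℂ) : ℝ :=
  ∑ i, f (eigsDesc S i)

/-- Final averages `Q_{j,r} = (1/(r-j)) (∑_{i=j+1}^k a_i + ∑_{i=j+1}^r λ_i)` (1-based). -/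
noncomputable def finalAvg {d k : ℕ} (lam : Fin d → ℝ) (a : Fin k → ℝ) (j r : ℕ) : ℝ :=
  ((∑ i : Fin k, if j ≤ (i : ℕ) then a i else 0) +
      (∑ i : Fin d, if j ≤ (i : ℕ) ∧ (i : ℕ) < r then lam i else 0)) / ((r : ℝ) - (j : ℝ))

/-- Initial averages: `initAvg lam a lo hi = P_{lo+1,hi}` (1-based), i.e. the average of
`h_i = λ_i + a_i` over the (0-based) index window `[lo, hi)`. -/
noncomputable def initAvg {d k : ℕ} (lam : Fin d → ℝ) (a : Fin k → ℝ) (lo hi : ℕ) : ℝ :=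
  ((∑ i : Fin d, if lo ≤ (i : ℕ) ∧ (i : ℕ) < hi then lam i else 0) +
      (∑ i : Fin k, if lo ≤ (i : ℕ) ∧ (i : ℕ) < hi then a i else 0)) / ((hi : ℝ) - (lo : ℝ))

/-- 1-based access to a vector indexed by `Fin d`. -/
noncomputable def get1 {d : ℕ} (lam : Fin d → ℝ) (i : ℕ) : ℝ :=
  if h : i - 1 < d then lam ⟨i - 1, h⟩ else 0

/-- The index `s` is feasible for the pair `(λ, a)`: the unique vector
`ν_s = (c·1_{r-s}, λ_{r+1},…,λ_d)` determined by the truncated data satisfies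
`a^s ≺ ν_s - λ^s`. -/
def FeasibleIdx {d k : ℕ} (lam : Fin d → ℝ) (a : Fin k → ℝ) (s : ℕ) : Prop :=
  ∃ r : ℕ, ∃ c : ℝ, s < r ∧ r ≤ d ∧ 0 < c ∧
    (∀ i : Fin d, s ≤ (i : ℕ) → (i : ℕ) < r → lam i ≤ c) ∧
    (∀ hrd : r < d, c ≤ lam ⟨r, hrd⟩) ∧
    ((r : ℝ) - (s : ℝ)) * c =
      (∑ i : Fin d, if s ≤ (i : ℕ) ∧ (i : ℕ) < r then lam i else 0) +
        (∑ i : Fin k, if s ≤ (i : ℕ) then a i else 0) ∧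
    MajorizedByPad (fun i : Fin (k - s) => a ⟨s + (i : ℕ), by have := i.isLt; omega⟩)
      (fun i : Fin (d - s) =>
        if s + (i : ℕ) < r then c - lam ⟨s + (i : ℕ), by have := i.isLt; omega⟩ else 0)

theorem stmt_7 {d k : ℕ} (hdk : d ≤ k)
    (lam : Fin d → ℝ) (hlam : Monotone lam) (hlam0 : ∀ i, 0 ≤ lam i)
    (a : Fin k → ℝ) (ha : ∀ i, 0 < a i)
    (r : ℕ) (hr1 : 1 ≤ r) (hrd : r ≤ d) :
    (r < d → finalAvg lam a 0 r < get1 lam (r + 1) →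
      ∀ j, r < j → j ≤ d → finalAvg lam a 0 r < finalAvg lam a 0 j) ∧
    (r < d → finalAvg lam a 0 r ≤ get1 lam (r + 1) →
      ∀ j, r < j → j ≤ d → finalAvg lam a 0 r ≤ finalAvg lam a 0 j) ∧
    (get1 lam r ≤ finalAvg lam a 0 r →
      ∀ j, 1 ≤ j → j < r → finalAvg lam a 0 r ≤ finalAvg lam a 0 j) := by
  classical
  set A : ℝ := ∑ i, a i with hA
  set f : ℕ → ℝ := fun i => if h : i < d then lam ⟨i, h⟩ else 0 with hf
  -- rewrite finalAvg
  have hQ : ∀ j : ℕ, j ≤ d →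
      finalAvg lam a 0 j = (A + ∑ i ∈ Finset.range j, f i) / (j : ℝ) := by
    intro j hj
    have h1 : (∑ i : Fin k, if (0:ℕ) ≤ (i : ℕ) then a i else 0) = A := by
      simp [hA]
    have h2 : (∑ i : Fin d, if (0:ℕ) ≤ (i : ℕ) ∧ (i : ℕ) < j then lam i else 0)
        = ∑ i ∈ Finset.range j, f i := by
      have : (∑ i : Fin d, if (0:ℕ) ≤ (i : ℕ) ∧ (i : ℕ) < j then lam i else 0)
          = ∑ i ∈ Finset.range d, if i < j then f i else 0 := by
        rw [Finset.sum_range fun i => if i < j then f i else 0]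
        refine Finset.sum_congr rfl fun i _ => ?_
        simp [hf, i.isLt]
      rw [this, ← Finset.sum_filter]
      congr 1
      ext i
      simp only [Finset.mem_filter, Finset.mem_range]
      omega
    simp only [finalAvg, h1, h2, Nat.cast_zero, sub_zero]
  -- monotonicity of f below d
  have hfmono : ∀ m n : ℕ, m ≤ n → n < d → f m ≤ f n := by
    intro m n hmn hnd
    have hmd : m < d := lt_of_le_of_lt hmn hnd
    simp only [hf, dif_pos hmd, dif_pos hnd]
    exact hlam (by exact hmn)
  have hrange : ∀ m n : ℕ, m ≤ n →
      (∑ i ∈ Finset.range n, f i) = (∑ i ∈ Finset.range m, f i) + ∑ i ∈ Finset.Ico m n, f i := by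
    intro m n hmn
    rw [Finset.range_eq_Ico, Finset.range_eq_Ico]
    exact (Finset.sum_Ico_consecutive f (Nat.zero_le m) hmn).symm
  have hlow : ∀ m n : ℕ, m ≤ n → n ≤ d →
      ((n : ℝ) - m) * f m ≤ ∑ i ∈ Finset.Ico m n, f i := by
    intro m n hmn hnd
    have := Finset.card_nsmul_le_sum (Finset.Ico m n) f (f m) (fun i hi => by
      rw [Finset.mem_Ico] at hi
      exact hfmono m i hi.1 (lt_of_lt_of_le hi.2 hnd))
    rw [Nat.card_Ico, nsmul_eq_mul] at this
    calc ((n : ℝ) - m) * f m = ((n - m : ℕ) : ℝ) * f m := by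
          rw [Nat.cast_sub hmn]
      _ ≤ _ := this
  have hhigh : ∀ m n : ℕ, m ≤ n → n ≤ d →
      (∑ i ∈ Finset.Ico m n, f i) ≤ ((n : ℝ) - m) * f (n - 1) := by
    intro m n hmn hnd
    have := Finset.sum_le_card_nsmul (Finset.Ico m n) f (f (n - 1)) (fun i hi => by
      rw [Finset.mem_Ico] at hi
      exact hfmono i (n - 1) (by omega) (by omega))
    rw [Nat.card_Ico, nsmul_eq_mul] at this
    calc (∑ i ∈ Finset.Ico m n, f i) ≤ ((n - m : ℕ) : ℝ) * f (n - 1) := this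
      _ = ((n : ℝ) - m) * f (n - 1) := by rw [Nat.cast_sub hmn]
  have hrpos : (0 : ℝ) < r := by exact_mod_cast hr1
  refine ⟨?_, ?_, ?_⟩
  · -- part 1: strict
    intro hrd' hlt j hrj hjd
    rw [hQ r hrd, hQ j hjd]
    rw [hQ r hrd] at hlt
    have hg : get1 lam (r + 1) = f r := by
      simp only [get1, hf, Nat.add_sub_cancel, dif_pos hrd']
    rw [hg] at hlt
    have hjpos : (0 : ℝ) < j := by exact_mod_cast (by omega : 0 < j)
    have hT : (∑ i ∈ Finset.range r, f i) + ((j : ℝ) - r) * f r ≤ ∑ i ∈ Finset.range j, f i := by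
      rw [hrange r j (le_of_lt hrj)]
      exact (add_le_add_iff_left _).mpr (hlow r j (le_of_lt hrj) hjd)
    rw [div_lt_div_iff₀ hrpos hjpos]
    rw [div_lt_iff₀ hrpos] at hlt
    have hjr : (r : ℝ) < j := by exact_mod_cast hrj
    nlinarith [mul_le_mul_of_nonneg_right hT (le_of_lt hrpos)]
  · -- part 2: non-strict
    intro hrd' hle j hrj hjd
    rw [hQ r hrd, hQ j hjd]
    rw [hQ r hrd] at hle
    have hg : get1 lam (r + 1) = f r := by
      simp only [get1, hf, Nat.add_sub_cancel, dif_pos hrd']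
    rw [hg] at hle
    have hjpos : (0 : ℝ) < j := by exact_mod_cast (by omega : 0 < j)
    have hT : (∑ i ∈ Finset.range r, f i) + ((j : ℝ) - r) * f r ≤ ∑ i ∈ Finset.range j, f i := by
      rw [hrange r j (le_of_lt hrj)]
      exact (add_le_add_iff_left _).mpr (hlow r j (le_of_lt hrj) hjd)
    rw [div_le_div_iff₀ hrpos hjpos]
    rw [div_le_iff₀ hrpos] at hle
    have hjr : (r : ℝ) < j := by exact_mod_cast hrj
    nlinarith [mul_le_mul_of_nonneg_right hT (le_of_lt hrpos)]
  · -- part 3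
    intro hle j hj1 hjr
    rw [hQ r hrd, hQ j (by omega)]
    rw [hQ r hrd] at hle
    have hg : get1 lam r = f (r - 1) := by
      simp only [get1, hf]
    rw [hg] at hle
    have hjpos : (0 : ℝ) < j := by exact_mod_cast hj1
    have hT : (∑ i ∈ Finset.range r, f i) ≤
        (∑ i ∈ Finset.range j, f i) + ((r : ℝ) - j) * f (r - 1) := by
      rw [hrange j r (le_of_lt hjr)]
      exact (add_le_add_iff_left _).mpr (hhigh j r (le_of_lt hjr) hrd)
    rw [div_le_div_iff₀ hrpos hjpos]
    rw [le_div_iff₀ hrpos] at hle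
    have hjr' : (j : ℝ) < r := by exact_mod_cast hjr
    nlinarith [mul_le_mul_of_nonneg_right hT (le_of_lt hjpos)]
end

section
/- Let λ = (λ_1 ≤ … ≤ λ_d) ∈ ℝ_{≥0}^d be non-decreasing and a = (a_1,…,a_k) ∈ ℝ_{>0}^k with k ≥ d, and assume (1/d)(Σ_{i=1}^k a_i + Σ_{i=1}^d λ_i) < λ_d. Then: (1) there exists a unique index s ∈ {1,…,d−1} such that λ_s ≤ Q_s < λ_{s+1}, and this s satisfies s = max{w ∈ {1,…,d−1} : Q_w = min_{j ∈ {1,…,d}} Q_j}; (2) if another index r ∈ {1,…,d−1} satisfies λ_r ≤ Q_r ≤ λ_{r+1}, then Q_r = min_{j ∈ {1,…,d}} Q_j = Q_s and r ≤ s, and if moreover r < s then Q_r = λ_{r+1} = λ_s. -/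
open Finset
open scoped ComplexOrder

section aux
variable {d k : ℕ} (lam : Fin d → ℝ) (a : Fin k → ℝ)

lemma get1_eq (s : ℕ) (h : s - 1 < d) : get1 lam s = lam ⟨s-1, h⟩ := by
  simp [get1, h]

lemma Qf_mul (r : ℕ) (hr : 1 ≤ r) :
    (r:ℝ) * finalAvg lam a 0 r =
      (∑ i, a i) + ∑ i : Fin d, if (i:ℕ) < r then lam i else 0 := by
  have hr0 : (r:ℝ) ≠ 0 := by positivity
  unfold finalAvg
  simp only [Nat.zero_le, if_true, true_and, Nat.cast_zero, sub_zero]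
  field_simp

lemma key (r : ℕ) (hr : 1 ≤ r) (hrd : r < d) :
    ((r:ℝ)+1) * finalAvg lam a 0 (r+1) = (r:ℝ) * finalAvg lam a 0 r + lam ⟨r, hrd⟩ := by
  have h1 := Qf_mul lam a r hr
  have h2 := Qf_mul lam a (r+1) (by omega)
  push_cast at h2
  rw [h2, h1]
  have : (∑ i : Fin d, if (i:ℕ) < r + 1 then lam i else 0)
      = (∑ i : Fin d, if (i:ℕ) < r then lam i else 0) + lam ⟨r, hrd⟩ := by
    have hsplit : ∀ i : Fin d, (if (i:ℕ) < r+1 then lam i else 0)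
        = (if (i:ℕ) < r then lam i else 0) + (if i = (⟨r, hrd⟩ : Fin d) then lam i else 0) := by
      intro i
      rcases Nat.lt_trichotomy (i:ℕ) r with h | h | h
      · rw [if_pos (by omega), if_pos h, if_neg (by simp [Fin.ext_iff]; omega)]; ring
      · rw [if_pos (by omega), if_neg (by omega), if_pos (by simp [Fin.ext_iff, h])]; ring
      · rw [if_neg (by omega), if_neg (by omega), if_neg (by simp [Fin.ext_iff]; omega)]; ring
    rw [Finset.sum_congr rfl (fun i _ => hsplit i), Finset.sum_add_distrib,
      Finset.sum_ite_eq' Finset.univ (⟨r, hrd⟩ : Fin d) lam]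
    simp
  rw [this]; ring
end aux

section aux2
variable {d k : ℕ} (lam : Fin d → ℝ) (a : Fin k → ℝ)

-- Q r < λ_{r+1} → Q r < Q (r+1)
lemma cmpQ (r : ℕ) (hr : 1 ≤ r) (hrd : r < d)
    (h : finalAvg lam a 0 r < lam ⟨r, hrd⟩) :
    finalAvg lam a 0 r < finalAvg lam a 0 (r+1) := by
  have hk := key lam a r hr hrd
  have : (1:ℝ) ≤ (r:ℝ) := by exact_mod_cast hr
  nlinarith

lemma cmpQ' (r : ℕ) (hr : 1 ≤ r) (hrd : r < d)
    (h : lam ⟨r, hrd⟩ ≤ finalAvg lam a 0 r) :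
    finalAvg lam a 0 (r+1) ≤ finalAvg lam a 0 r := by
  have hk := key lam a r hr hrd
  have : (1:ℝ) ≤ (r:ℝ) := by exact_mod_cast hr
  nlinarith

lemma cmpL (r : ℕ) (hr : 1 ≤ r) (hrd : r < d)
    (h : finalAvg lam a 0 r < lam ⟨r, hrd⟩) :
    finalAvg lam a 0 (r+1) < lam ⟨r, hrd⟩ := by
  have hk := key lam a r hr hrd
  have : (1:ℝ) ≤ (r:ℝ) := by exact_mod_cast hr
  nlinarith

lemma cmpL' (r : ℕ) (hr : 1 ≤ r) (hrd : r < d)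
    (h : lam ⟨r, hrd⟩ ≤ finalAvg lam a 0 r) :
    lam ⟨r, hrd⟩ ≤ finalAvg lam a 0 (r+1) := by
  have hk := key lam a r hr hrd
  have : (1:ℝ) ≤ (r:ℝ) := by exact_mod_cast hr
  nlinarith

lemma cmpL'' (r : ℕ) (hr : 1 ≤ r) (hrd : r < d)
    (h : lam ⟨r, hrd⟩ ≤ finalAvg lam a 0 (r+1)) :
    lam ⟨r, hrd⟩ ≤ finalAvg lam a 0 r := by
  have hk := key lam a r hr hrd
  have : (1:ℝ) ≤ (r:ℝ) := by exact_mod_cast hr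
  nlinarith

lemma cmpEq (r : ℕ) (hr : 1 ≤ r) (hrd : r < d)
    (h : lam ⟨r, hrd⟩ = finalAvg lam a 0 r) :
    finalAvg lam a 0 (r+1) = finalAvg lam a 0 r := by
  have hk := key lam a r hr hrd
  have : (1:ℝ) ≤ (r:ℝ) := by exact_mod_cast hr
  nlinarith

end aux2

section aux3
variable {d k : ℕ} (lam : Fin d → ℝ) (a : Fin k → ℝ)

lemma fwd (hlam : Monotone lam) (s : ℕ) (hs : 1 ≤ s) (hsd : s < d)
    (hgood : finalAvg lam a 0 s < lam ⟨s, hsd⟩) :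
    ∀ j (hj1 : s + 1 ≤ j) (hj2 : j ≤ d),
      finalAvg lam a 0 s < finalAvg lam a 0 j ∧
      finalAvg lam a 0 j < lam ⟨j-1, by omega⟩ := by
  intro j hj1
  induction j, hj1 using Nat.le_induction with
  | base =>
    intro h2
    exact ⟨cmpQ lam a s hs hsd hgood, cmpL lam a s hs hsd hgood⟩
  | succ n hn ih =>
    intro h2
    have hnd : n < d := by omega
    have ihh := ih (by omega)
    have hA : finalAvg lam a 0 n < lam ⟨n, hnd⟩ :=
      lt_of_lt_of_le ihh.2 (hlam (by simp [Fin.le_def]))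
    exact ⟨lt_trans ihh.1 (cmpQ lam a n (by omega) hnd hA),
      cmpL lam a n (by omega) hnd hA⟩

lemma bwd (hlam : Monotone lam) (s : ℕ) (hs : 1 ≤ s) (hsd : s ≤ d)
    (hgood : lam ⟨s-1, by omega⟩ ≤ finalAvg lam a 0 s) :
    ∀ j (hj1 : 1 ≤ j) (hj2 : j ≤ s),
      finalAvg lam a 0 s ≤ finalAvg lam a 0 j ∧
      lam ⟨j-1, by omega⟩ ≤ finalAvg lam a 0 j ∧
      ∀ h : j < s, lam ⟨j, by omega⟩ ≤ finalAvg lam a 0 j := by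
  suffices H : ∀ n j, j + n = s → 1 ≤ j →
      finalAvg lam a 0 s ≤ finalAvg lam a 0 j ∧
      (∀ hjd : j - 1 < d, lam ⟨j-1, hjd⟩ ≤ finalAvg lam a 0 j) ∧
      (∀ h : j < d, j < s → lam ⟨j, h⟩ ≤ finalAvg lam a 0 j) by
    intro j hj1 hj2
    obtain ⟨h1, h2, h3⟩ := H (s - j) j (by omega) hj1
    exact ⟨h1, h2 (by omega), fun h => h3 (by omega) h⟩
  intro n
  induction n with
  | zero =>
    intro j hj hj1
    have : j = s := by omega
    subst this
    exact ⟨le_refl _, fun hjd => hgood, fun h hlt => absurd hlt (lt_irrefl _)⟩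
  | succ n ih =>
    intro j hj hj1
    have hjd : j < d := by omega
    obtain ⟨h1, h2, h3⟩ := ih (j+1) (by omega) (by omega)
    have hL : lam ⟨j, hjd⟩ ≤ finalAvg lam a 0 (j+1) := h2 (by omega)
    have hL' : lam ⟨j, hjd⟩ ≤ finalAvg lam a 0 j := cmpL'' lam a j hj1 hjd hL
    refine ⟨le_trans h1 (cmpQ' lam a j hj1 hjd hL'), ?_, fun h hlt => hL'⟩
    intro hjd1
    exact le_trans (hlam (show (⟨j-1,hjd1⟩ : Fin d) ≤ ⟨j,hjd⟩ by simp [Fin.le_def])) hL'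

end aux3

section aux4
variable {d k : ℕ} (lam : Fin d → ℝ) (a : Fin k → ℝ)

lemma Q1 (hd : 0 < d) : finalAvg lam a 0 1 = (∑ i, a i) + lam ⟨0, hd⟩ := by
  have h := Qf_mul lam a 1 le_rfl
  have h2 : (∑ i : Fin d, if (i:ℕ) < 1 then lam i else 0) = lam ⟨0, hd⟩ := by
    have : ∀ i : Fin d, (if (i:ℕ) < 1 then lam i else 0)
        = if i = ⟨0, hd⟩ then lam i else 0 := by
      intro i; congr 1
      simp [Fin.ext_iff, Nat.lt_one_iff]
    rw [Finset.sum_congr rfl (fun i _ => this i),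
      Finset.sum_ite_eq' Finset.univ (⟨0, hd⟩ : Fin d) lam]
    simp
  rw [h2] at h
  push_cast at h
  linarith

-- equality chain for r < s
lemma eqchain (hlam : Monotone lam) (s : ℕ) (hs : 1 ≤ s) (hsd : s ≤ d)
    (hgood : lam ⟨s-1, by omega⟩ ≤ finalAvg lam a 0 s)
    (r : ℕ) (hr1 : 1 ≤ r) (hrs : r < s)
    (hru : finalAvg lam a 0 r ≤ lam ⟨r, by omega⟩) :
    ∀ j (hj1 : r ≤ j) (hj2 : j ≤ s),
      finalAvg lam a 0 j = finalAvg lam a 0 r ∧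
      (r < j → lam ⟨j-1, by omega⟩ = lam ⟨r, by omega⟩) := by
  have hbwd := bwd lam a hlam s hs hsd hgood
  have hrl : lam ⟨r, by omega⟩ ≤ finalAvg lam a 0 r :=
    (hbwd r hr1 (by omega)).2.2 hrs
  have hreq : finalAvg lam a 0 r = lam ⟨r, by omega⟩ := le_antisymm hru hrl
  intro j hj1
  induction j, hj1 using Nat.le_induction with
  | base => exact fun _ => ⟨rfl, fun h => absurd h (lt_irrefl _)⟩
  | succ j hj ih =>
    intro hj2
    obtain ⟨ihq, _⟩ := ih (by omega)
    have hjd : j < d := by omega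
    have h1 : lam ⟨j, hjd⟩ ≤ finalAvg lam a 0 j := (hbwd j (by omega) (by omega)).2.2 (by omega)
    have h2 : lam ⟨r, by omega⟩ ≤ lam ⟨j, hjd⟩ := hlam (by simp [Fin.le_def]; omega)
    have heq : lam ⟨j, hjd⟩ = finalAvg lam a 0 j := le_antisymm h1 (by rw [ihq, hreq]; exact h2)
    refine ⟨by rw [cmpEq lam a j (by omega) hjd heq, ihq], fun _ => ?_⟩
    have : (⟨j+1-1, by omega⟩ : Fin d) = ⟨j, hjd⟩ := by simp
    rw [this, heq, ihq, hreq]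

end aux4


theorem stmt_8 {d k : ℕ} (hd : 0 < d) (hdk : d ≤ k)
    (lam : Fin d → ℝ) (hlam : Monotone lam) (hlam0 : ∀ i, 0 ≤ lam i)
    (a : Fin k → ℝ) (ha : ∀ i, 0 < a i)
    (hmean : finalAvg lam a 0 d < get1 lam d) :
    (∃! s : ℕ, 1 ≤ s ∧ s ≤ d - 1 ∧ get1 lam s ≤ finalAvg lam a 0 s ∧
        finalAvg lam a 0 s < get1 lam (s + 1)) ∧
    (∀ s : ℕ, 1 ≤ s → s ≤ d - 1 → get1 lam s ≤ finalAvg lam a 0 s →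
      finalAvg lam a 0 s < get1 lam (s + 1) →
      (IsGreatest {w : ℕ | 1 ≤ w ∧ w ≤ d - 1 ∧
          ∀ j, 1 ≤ j → j ≤ d → finalAvg lam a 0 w ≤ finalAvg lam a 0 j} s) ∧
      ∀ r : ℕ, 1 ≤ r → r ≤ d - 1 → get1 lam r ≤ finalAvg lam a 0 r →
        finalAvg lam a 0 r ≤ get1 lam (r + 1) →
        ((∀ j, 1 ≤ j → j ≤ d → finalAvg lam a 0 r ≤ finalAvg lam a 0 j) ∧
          finalAvg lam a 0 r = finalAvg lam a 0 s ∧ r ≤ s ∧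
          (r < s → finalAvg lam a 0 r = get1 lam (r + 1) ∧
            get1 lam (r + 1) = get1 lam s))) := by
  classical
  have hk0 : 0 < k := lt_of_lt_of_le hd hdk
  have hA : 0 < ∑ i, a i := Finset.sum_pos (fun i _ => ha i) ⟨⟨0, hk0⟩, Finset.mem_univ _⟩
  have hQ1 := Q1 lam a hd
  have g2 : ∀ (w : ℕ) (h : w < d), get1 lam (w+1) = lam ⟨w, h⟩ := fun w h =>
    get1_eq lam (w+1) (by omega)
  have hd2 : 2 ≤ d := by
    by_contra h
    have hd1 : d = 1 := by omega
    subst hd1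
    rw [get1_eq lam 1 (by omega)] at hmean
    have e : (⟨1-1, by omega⟩ : Fin 1) = ⟨0, hd⟩ := rfl
    rw [e] at hmean
    linarith
  -- goodness of an index implies all consequences; first the unique good index
  -- strict goodness transported to lam form
  have strict_form : ∀ s : ℕ, 1 ≤ s → s ≤ d - 1 → get1 lam s ≤ finalAvg lam a 0 s →
      finalAvg lam a 0 s < get1 lam (s + 1) →
      (∀ h : s - 1 < d, lam ⟨s-1, h⟩ ≤ finalAvg lam a 0 s) ∧
      (∀ h : s < d, finalAvg lam a 0 s < lam ⟨s, h⟩) := by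
    intro s h1 h2 h3 h4
    constructor
    · intro h; rwa [get1_eq lam s h] at h3
    · intro h; rwa [g2 s h] at h4
  -- uniqueness core: no strictly smaller good index below a (weakly) good one
  have no_lt : ∀ (s : ℕ) (h1 : 1 ≤ s) (h2 : s ≤ d),
      (lam ⟨s-1, by omega⟩ ≤ finalAvg lam a 0 s) →
      ∀ (t : ℕ) (ht1 : 1 ≤ t) (ht2 : t < s), ¬ (finalAvg lam a 0 t < lam ⟨t, by omega⟩) := by
    intro s h1 h2 h3 t ht1 ht2 hcon
    have := (bwd lam a hlam s h1 h2 h3 t ht1 (le_of_lt ht2)).2.2 ht2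
    linarith
  -- the candidate via findGreatest
  set P : ℕ → Prop := fun w => 1 ≤ w ∧ get1 lam w ≤ finalAvg lam a 0 w with hP
  have hP1 : P 1 := by
    refine ⟨le_rfl, ?_⟩
    rw [get1_eq lam 1 (by omega), hQ1]
    have e : (⟨1-1, by omega⟩ : Fin d) = ⟨0, hd⟩ := rfl
    rw [e]
    linarith
  obtain ⟨s0, hs1, hs2, hPs, hgr⟩ :
      ∃ s0, 1 ≤ s0 ∧ s0 ≤ d - 1 ∧ P s0 ∧ ∀ m, s0 < m → m ≤ d - 1 → ¬ P m :=
    ⟨Nat.findGreatest P (d-1), Nat.le_findGreatest (by omega) hP1, Nat.findGreatest_le _,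
      Nat.findGreatest_spec (by omega : 1 ≤ d - 1) hP1,
      fun m hm1 hm2 => Nat.findGreatest_is_greatest hm1 hm2⟩
  have hPs' : lam ⟨s0 - 1, by omega⟩ ≤ finalAvg lam a 0 s0 := by
    have := hPs.2; rwa [get1_eq lam s0 (by omega)] at this
  have hstrict : finalAvg lam a 0 s0 < lam ⟨s0, by omega⟩ := by
    rcases eq_or_lt_of_le hs2 with heq | hlt
    · by_contra hcon
      push_neg at hcon
      have h2 := cmpL' lam a s0 hs1 (by omega) hcon
      rw [get1_eq lam d (by omega)] at hmean
      have hsd : s0 + 1 = d := by omega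
      rw [hsd] at h2
      have hidx : (⟨s0, by omega⟩ : Fin d) = ⟨d-1, by omega⟩ := by
        simp only [Fin.mk.injEq]; omega
      rw [hidx] at h2
      linarith
    · have hnot : ¬ P (s0 + 1) := hgr (s0+1) (by omega) (by omega)
      by_contra hcon
      push_neg at hcon
      have h2 := cmpL' lam a s0 hs1 (by omega) hcon
      exact hnot ⟨by omega, by rw [g2 s0 (by omega)]; exact h2⟩
  have hgood_s0 : 1 ≤ s0 ∧ s0 ≤ d - 1 ∧ get1 lam s0 ≤ finalAvg lam a 0 s0 ∧
      finalAvg lam a 0 s0 < get1 lam (s0 + 1) := by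
    refine ⟨hs1, hs2, hPs.2, ?_⟩
    rw [g2 s0 (by omega)]
    exact hstrict
  -- uniqueness of good index
  have huniq : ∀ y : ℕ, 1 ≤ y → y ≤ d - 1 → get1 lam y ≤ finalAvg lam a 0 y →
      finalAvg lam a 0 y < get1 lam (y + 1) → y = s0 := by
    intro y h1 h2 h3 h4
    obtain ⟨hy3, hy4⟩ := strict_form y h1 h2 h3 h4
    by_contra hne
    rcases Nat.lt_or_ge y s0 with h | h
    · exact no_lt s0 hs1 (by omega) hPs' y h1 h (hy4 (by omega))
    · have h' : s0 < y := by omega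
      exact no_lt y h1 (by omega) (hy3 (by omega)) s0 hs1 h' hstrict
  constructor
  · exact ⟨s0, hgood_s0, fun y hy => huniq y hy.1 hy.2.1 hy.2.2.1 hy.2.2.2⟩
  · intro s h1 h2 h3 h4
    obtain ⟨hb, hstr⟩ := strict_form s h1 h2 h3 h4
    have hsd : s < d := by omega
    have hb' := hb (by omega)
    have hstr' := hstr hsd
    have hfwd := fwd lam a hlam s h1 hsd hstr'
    have hbwd := bwd lam a hlam s h1 (by omega) hb'
    have hmin : ∀ j, 1 ≤ j → j ≤ d → finalAvg lam a 0 s ≤ finalAvg lam a 0 j := by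
      intro j hj1 hj2
      rcases le_or_gt j s with h | h
      · exact (hbwd j hj1 h).1
      · exact le_of_lt (hfwd j (by omega) hj2).1
    constructor
    · refine ⟨⟨h1, h2, hmin⟩, ?_⟩
      intro w hw
      obtain ⟨hw1, hw2, hw3⟩ := hw
      by_contra hcon
      push_neg at hcon
      have h5 := (hfwd w (by omega) (by omega)).1
      have h6 := hw3 s h1 (by omega)
      linarith
    · intro r hr1 hr2 hr3 hr4
      have hr3' : lam ⟨r-1, by omega⟩ ≤ finalAvg lam a 0 r := by
        rwa [get1_eq lam r (by omega)] at hr3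
      have hr4' : finalAvg lam a 0 r ≤ lam ⟨r, by omega⟩ := by
        rwa [g2 r (by omega)] at hr4
      have hrs : r ≤ s := by
        by_contra h
        push_neg at h
        have h5 := (hfwd r (by omega) (by omega)).2
        linarith
      rcases eq_or_lt_of_le hrs with heq | hlt
      · subst heq
        exact ⟨hmin, rfl, le_rfl, fun h => absurd h (lt_irrefl _)⟩
      · obtain ⟨hQeq, hLeq⟩ := eqchain lam a hlam s h1 (by omega) hb' r hr1 hlt hr4'
          s (le_of_lt hlt) le_rfl
        have hLeq' := hLeq hlt
        have hrlam : lam ⟨r, by omega⟩ ≤ finalAvg lam a 0 r := (hbwd r hr1 (le_of_lt hlt)).2.2 hlt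
        have hreq : finalAvg lam a 0 r = lam ⟨r, by omega⟩ := le_antisymm hr4' hrlam
        refine ⟨?_, hQeq.symm, hrs, fun _ => ?_⟩
        · intro j hj1 hj2
          rw [← hQeq]
          exact hmin j hj1 hj2
        · rw [g2 r (by omega), get1_eq lam s (by omega)]
          exact ⟨hreq, hLeq'.symm⟩
end

section
/- Let λ = (λ_1 ≤ … ≤ λ_d) ∈ ℝ_{≥0}^d be non-decreasing and a = (a_1,…,a_k) ∈ ℝ_{>0}^k with k ≥ d, assume (1/d)(Σ_{i=1}^k a_i + Σ_{i=1}^d λ_i) < λ_d, and let s ∈ {1,…,d−1} be the unique index with λ_s ≤ Q_s < λ_{s+1}. Suppose ρ ∈ ℝ^d has the form ρ = (c·1_r, λ_{r+1},…,λ_d) for some r ∈ {1,…,d} and c > 0 (the case r = d meaning ρ = c·1_d), ρ is non-decreasing, λ_i ≤ ρ_i for every i ∈ {1,…,d}, and Σ_{i=1}^d ρ_i = Σ_{i=1}^d λ_i + Σ_{i=1}^k a_i. Then ρ = (Q_s·1_s, λ_{s+1},…,λ_d). -/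
open Finset
open scoped ComplexOrder

theorem stmt_9 {d k : ℕ} (hd : 0 < d) (hdk : d ≤ k)
    (lam : Fin d → ℝ) (hlam : Monotone lam) (hlam0 : ∀ i, 0 ≤ lam i)
    (a : Fin k → ℝ) (ha : ∀ i, 0 < a i)
    (hmean : finalAvg lam a 0 d < get1 lam d)
    (s : ℕ) (hs1 : 1 ≤ s) (hs2 : s ≤ d - 1)
    (hsl : get1 lam s ≤ finalAvg lam a 0 s) (hsu : finalAvg lam a 0 s < get1 lam (s + 1))
    (ρ : Fin d → ℝ) (r : ℕ) (c : ℝ) (hr1 : 1 ≤ r) (hrd : r ≤ d) (hc : 0 < c)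
    (hform : ∀ i : Fin d, ρ i = if (i : ℕ) < r then c else lam i)
    (hρmono : Monotone ρ) (hle : ∀ i, lam i ≤ ρ i)
    (htr : ∑ i, ρ i = ∑ i, lam i + ∑ i, a i) :
    ∀ i : Fin d, ρ i = if (i : ℕ) < s then finalAvg lam a 0 s else lam i := by
  classical
  have hd2 : 2 ≤ d := by omega
  have hsd : s < d := by omega
  set A := ∑ i, a i with hA
  set g : ℕ → ℝ := fun i => get1 lam (i + 1) with hgdef
  have hg : ∀ (i : ℕ) (h : i < d), lam ⟨i, h⟩ = g i := by
    intro i h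
    simp [hgdef, get1, h]
  have hgmono : ∀ i j : ℕ, i ≤ j → j < d → g i ≤ g j := by
    intro i j hij hj
    have hi : i < d := lt_of_le_of_lt hij hj
    rw [← hg i hi, ← hg j hj]
    exact hlam hij
  -- converting Fin-sums to range-sums of g
  have hLall : (∑ i : Fin d, lam i) = ∑ i ∈ Finset.range d, g i := by
    rw [← Fin.sum_univ_eq_sum_range (fun i => g i)]
    exact Finset.sum_congr rfl fun i _ => by rw [← hg i i.isLt]
  have hL : ∀ m : ℕ, m ≤ d →
      (∑ i : Fin d, if (i : ℕ) < m then lam i else 0) = ∑ i ∈ Finset.range m, g i := by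
    intro m hm
    have h1 : (∑ i : Fin d, if (i : ℕ) < m then lam i else 0)
        = ∑ i ∈ Finset.range d, (if i < m then g i else 0) := by
      rw [← Fin.sum_univ_eq_sum_range (fun i => if i < m then g i else 0)]
      refine Finset.sum_congr rfl fun i _ => ?_
      by_cases h : (i : ℕ) < m
      · rw [if_pos h, if_pos h, ← hg i i.isLt]
      · rw [if_neg h, if_neg h]
    rw [h1]
    rw [← Finset.sum_subset (Finset.range_subset_range.2 hm)
      (fun x _ hx => by rw [if_neg (by simpa using hx)])]
    exact Finset.sum_congr rfl fun i hi => if_pos (Finset.mem_range.1 hi)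
  -- finalAvg formula
  have hQ : ∀ m : ℕ, m ≤ d →
      finalAvg lam a 0 m = (A + ∑ i ∈ Finset.range m, g i) / m := by
    intro m hm
    have : (∑ i : Fin k, if 0 ≤ (i : ℕ) then a i else 0) = A := by
      simp [hA]
    rw [finalAvg, this]
    have h2 : (∑ i : Fin d, if 0 ≤ (i : ℕ) ∧ (i : ℕ) < m then lam i else 0)
        = ∑ i : Fin d, if (i : ℕ) < m then lam i else 0 := by
      refine Finset.sum_congr rfl fun i _ => by simp
    rw [h2, hL m hm]
    norm_num
  set Qs := finalAvg lam a 0 s with hQsdef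
  have hs0 : (0 : ℝ) < (s : ℝ) := by exact_mod_cast hs1
  have hsQs : (s : ℝ) * Qs = A + ∑ i ∈ Finset.range s, g i := by
    rw [hQsdef, hQ s (le_of_lt hsd)]
    field_simp
  -- trace identity : r * c = A + ∑_{i<r} g i
  have hsplit : ∀ m : ℕ, m ≤ d → (∑ i ∈ Finset.range d, g i)
      = (∑ i ∈ Finset.range m, g i) + ∑ i ∈ Finset.Ico m d, g i := by
    intro m hm
    simp only [Finset.range_eq_Ico]
    exact (Finset.sum_Ico_consecutive _ (Nat.zero_le m) hm).symm
  have hrho : (∑ i, ρ i) = (r : ℝ) * c + ∑ i ∈ Finset.Ico r d, g i := by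
    have h1 : (∑ i, ρ i) = ∑ i ∈ Finset.range d, (if i < r then c else g i) := by
      rw [← Fin.sum_univ_eq_sum_range (fun i => if i < r then c else g i)]
      refine Finset.sum_congr rfl fun i _ => ?_
      rw [hform i]
      by_cases h : (i : ℕ) < r
      · rw [if_pos h, if_pos h]
      · rw [if_neg h, if_neg h, ← hg i i.isLt]
    rw [h1, Finset.range_eq_Ico, ← Finset.sum_Ico_consecutive _ (Nat.zero_le r) hrd,
      ← Finset.range_eq_Ico]
    congr 1
    · rw [Finset.sum_congr rfl fun i hi => if_pos (Finset.mem_range.1 hi)]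
      rw [Finset.sum_const, Finset.card_range, nsmul_eq_mul]
    · exact Finset.sum_congr rfl fun i hi =>
        if_neg (by have := (Finset.mem_Ico.1 hi).1; omega)
  have hrc : (r : ℝ) * c = A + ∑ i ∈ Finset.range r, g i := by
    have := htr
    rw [hrho, hLall, hsplit r hrd] at this
    linarith
  -- bounds from hle and hρmono
  have hglec : ∀ i : ℕ, i < r → g i ≤ c := by
    intro i hi
    have hid : i < d := lt_of_lt_of_le hi hrd
    have := hle ⟨i, hid⟩
    rw [hform ⟨i, hid⟩, if_pos hi, hg i hid] at this
    exact this
  -- hsu in g form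
  have hsu' : Qs < g s := by
    have : get1 lam (s + 1) = g s := by rw [hgdef]
    rwa [this] at hsu
  have hsl' : g (s - 1) ≤ Qs := by
    have h1 : g (s - 1) = get1 lam s := by
      simp only [hgdef]
      rw [Nat.sub_add_cancel hs1]
    rw [h1]; exact hsl
  -- Step 1 : r ≤ s
  have hrs : r ≤ s := by
    by_contra hcon
    push_neg at hcon
    have ind : ∀ j : ℕ, s ≤ j → j ≤ r - 1 →
        A + (∑ i ∈ Finset.range j, g i) < (j : ℝ) * g j := by
      intro j hj
      induction j, hj using Nat.le_induction with
      | base =>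
        intro _
        have := mul_lt_mul_of_pos_left hsu' hs0
        linarith [hsQs]
      | succ j hj ih =>
        intro hjr
        have h1 : A + (∑ i ∈ Finset.range j, g i) < (j : ℝ) * g j := ih (by omega)
        have h2 : g j ≤ g (j + 1) := hgmono j (j + 1) (by omega) (by omega)
        rw [Finset.sum_range_succ]
        push_cast
        have h4 : ((j : ℝ) + 1) * g j ≤ ((j : ℝ) + 1) * g (j + 1) :=
          mul_le_mul_of_nonneg_left h2 (by positivity)
        push_cast at h4
        nlinarith
    have h1 : A + (∑ i ∈ Finset.range (r - 1), g i) < ((r - 1 : ℕ) : ℝ) * g (r - 1) :=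
      ind (r - 1) (by omega) le_rfl
    have h2 : g (r - 1) ≤ c := hglec (r - 1) (by omega)
    have h3 : (∑ i ∈ Finset.range r, g i)
        = (∑ i ∈ Finset.range (r - 1), g i) + g (r - 1) := by
      have heq : r - 1 + 1 = r := by omega
      have h3' := Finset.sum_range_succ g (r - 1)
      rw [heq] at h3'
      exact h3'
    have hcast : ((r - 1 : ℕ) : ℝ) = (r : ℝ) - 1 := by
      have : (1 : ℕ) ≤ r := hr1
      push_cast [Nat.cast_sub this]
      ring
    rw [hcast] at h1
    have hr0 : (1 : ℝ) ≤ (r : ℝ) := by exact_mod_cast hr1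
    rw [h3] at hrc
    have hr0' : (0 : ℝ) < (r : ℝ) := by linarith
    have h5 : (r : ℝ) * g (r - 1) ≤ (r : ℝ) * c :=
      mul_le_mul_of_nonneg_left h2 (le_of_lt hr0')
    nlinarith
  -- Step 2 : each g i ≤ Qs on Ico r s, and c ≤ Qs if r < s
  have hgQs : ∀ i : ℕ, r ≤ i → i < s → g i ≤ Qs := by
    intro i _ his
    exact le_trans (hgmono i (s - 1) (by omega) (by omega)) hsl'
  have hsum2 : (s : ℝ) * Qs = (r : ℝ) * c + ∑ i ∈ Finset.Ico r s, g i := by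
    rw [hsQs, hrc]
    simp only [Finset.range_eq_Ico]
    rw [← Finset.sum_Ico_consecutive _ (Nat.zero_le r) hrs]
    ring
  have hIcoLe : (∑ i ∈ Finset.Ico r s, g i) ≤ ((s : ℝ) - (r : ℝ)) * Qs := by
    calc (∑ i ∈ Finset.Ico r s, g i) ≤ ∑ i ∈ Finset.Ico r s, Qs :=
          Finset.sum_le_sum fun i hi => by
            have := Finset.mem_Ico.1 hi
            exact hgQs i this.1 this.2
      _ = ((s : ℝ) - (r : ℝ)) * Qs := by
          rw [Finset.sum_const, Nat.card_Ico, nsmul_eq_mul]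
          have : ((s - r : ℕ) : ℝ) = (s : ℝ) - (r : ℝ) := by
            push_cast [Nat.cast_sub hrs]; ring
          rw [this]
  have hr0 : (0 : ℝ) < (r : ℝ) := by exact_mod_cast hr1
  have hcQs : c = Qs := by
    rcases eq_or_lt_of_le hrs with h | h
    · have : (s : ℝ) = (r : ℝ) := by exact_mod_cast h.symm
      have h0 : (∑ i ∈ Finset.Ico r s, g i) = 0 := by
        rw [Finset.Ico_eq_empty (by omega), Finset.sum_empty]
      have h5 : (r : ℝ) * Qs = (r : ℝ) * c := by
        rw [this, h0] at hsum2; linarith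
      exact (mul_left_cancel₀ (ne_of_gt hr0) h5).symm
    · have hcle : c ≤ Qs := by
        have h1 : c ≤ g r := by
          have hrd' : r < d := by omega
          have := hρmono (a := ⟨r - 1, by omega⟩) (b := ⟨r, hrd'⟩)
            (by simp only [Fin.mk_le_mk]; omega)
          rw [hform ⟨r - 1, by omega⟩, hform ⟨r, hrd'⟩, if_pos (by omega : r - 1 < r),
            if_neg (by omega : ¬ r < r), hg r hrd'] at this
          exact this
        exact le_trans h1 (hgQs r le_rfl h)
      have h5 : (r : ℝ) * Qs ≤ (r : ℝ) * c := by linarith [hsum2, hIcoLe]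
      have h6 : Qs ≤ c := le_of_mul_le_mul_left h5 hr0
      linarith
  have hIcoEq : (∑ i ∈ Finset.Ico r s, g i) = ((s : ℝ) - (r : ℝ)) * Qs := by
    rw [hcQs] at hsum2
    linarith [hsum2]
  have heach : ∀ i : ℕ, r ≤ i → i < s → g i = Qs := by
    intro i hri his
    by_contra hne
    have hlt : g i < Qs := lt_of_le_of_ne (hgQs i hri his) hne
    have : (∑ j ∈ Finset.Ico r s, g j) < ∑ j ∈ Finset.Ico r s, Qs := by
      refine Finset.sum_lt_sum (fun j hj => ?_) ⟨i, Finset.mem_Ico.2 ⟨hri, his⟩, hlt⟩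
      have := Finset.mem_Ico.1 hj
      exact hgQs j this.1 this.2
    rw [Finset.sum_const, Nat.card_Ico, nsmul_eq_mul] at this
    have hcast : ((s - r : ℕ) : ℝ) = (s : ℝ) - (r : ℝ) := by
      push_cast [Nat.cast_sub hrs]; ring
    rw [hcast] at this
    linarith [hIcoEq]
  -- conclusion
  intro i
  rw [hform i]
  by_cases h1 : (i : ℕ) < r
  · rw [if_pos h1, if_pos (by omega : (i : ℕ) < s)]
    exact hcQs
  · rw [if_neg h1]
    by_cases h2 : (i : ℕ) < s
    · rw [if_pos h2]
      have := heach i (by omega) h2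
      rw [← hg i i.isLt] at this
      simpa using this
    · rw [if_neg h2]
end

section
/- Let (F_0, a) be initial data for the completion problem in ℂ^d with k ≥ d, let f : [0,∞) → [0,∞) be strictly convex, and let F = (F_0, G) ∈ C_a(F_0) be a global minimizer of P_f on C_a(F_0), with associated constants c_1 > … > c_p > 0 and sets J_1,…,J_p, and suppose p > 1. If h ∈ J_i and l ∈ J_r with i < r, then a_h − a_l ≥ c_i − c_r > 0. In particular, each set J_i consists of consecutive indices and J_1 < J_2 < … < J_p (every element of J_i is smaller than every element of J_j whenever i < j). -/
open Finset
open scoped ComplexOrder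

section AuxSpectral
open Polynomial Matrix

lemma my_charpoly_conj {n : Type*} [Fintype n] [DecidableEq n] {R : Type*} [CommRing R]
    [StarRing R] (U A : Matrix n n R) (h1 : star U * U = 1) :
    (star U * A * U).charpoly = A.charpoly := by
  have e1 : (C : R →+* R[X]).mapMatrix (star U) * Matrix.scalar n (X : R[X])
      * (C : R →+* R[X]).mapMatrix U = Matrix.scalar n (X : R[X]) := by
    rw [mul_assoc, (scalar_commute (X : R[X]) (fun r' => Commute.all _ _)
      ((C : R →+* R[X]).mapMatrix U)).eq, ← mul_assoc, ← RingHom.map_mul, h1,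
      RingHom.map_one, one_mul]
  have e2 : (C : R →+* R[X]).mapMatrix (star U * A * U)
      = (C : R →+* R[X]).mapMatrix (star U) * (C : R →+* R[X]).mapMatrix A
        * (C : R →+* R[X]).mapMatrix U := by
    rw [RingHom.map_mul, RingHom.map_mul]
  have hcm : charmatrix (star U * A * U)
      = (C : R →+* R[X]).mapMatrix (star U) * charmatrix A * (C : R →+* R[X]).mapMatrix U := by
    rw [charmatrix, charmatrix, mul_sub, sub_mul, e1, ← e2]
  have hdet : ((C : R →+* R[X]).mapMatrix (star U)).det * ((C : R →+* R[X]).mapMatrix U).det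
      = 1 := by
    rw [← det_mul, ← RingHom.map_mul, h1, RingHom.map_one, det_one]
  rw [Matrix.charpoly, Matrix.charpoly, hcm, det_mul, det_mul]
  calc ((C : R →+* R[X]).mapMatrix (star U)).det * (charmatrix A).det
        * ((C : R →+* R[X]).mapMatrix U).det
      = (charmatrix A).det * (((C : R →+* R[X]).mapMatrix (star U)).det
        * ((C : R →+* R[X]).mapMatrix U).det) := by ring
    _ = (charmatrix A).det := by rw [hdet, mul_one]

lemma my_charpoly_diagonal {n : Type*} [Fintype n] [DecidableEq n] {R : Type*} [CommRing R]
    (v : n → R) : (Matrix.diagonal v).charpoly = ∏ i, (X - C (v i)) := by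
  have hd : charmatrix (Matrix.diagonal v) = Matrix.diagonal fun i => (X : R[X]) - C (v i) := by
    ext i j
    by_cases h : i = j
    · subst h; simp
    · simp [h, Matrix.diagonal_apply_ne _ h]
  rw [Matrix.charpoly, hd, det_diagonal]

lemma my_charpoly_hermitian {n : Type*} [Fintype n] [DecidableEq n]
    {A : Matrix n n ℂ} (hA : A.IsHermitian) :
    A.charpoly = ∏ i, (X - C ((hA.eigenvalues i : ℂ))) := by
  have h1 : star ((hA.eigenvectorUnitary : Matrix n n ℂ)) * (hA.eigenvectorUnitary : Matrix n n ℂ)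
      = 1 := (Unitary.mem_iff.mp (hA.eigenvectorUnitary).2).1
  rw [← my_charpoly_conj (hA.eigenvectorUnitary : Matrix n n ℂ) A h1,
    ← Unitary.conjStarAlgAut_star_apply (S := ℂ), hA.conjStarAlgAut_star_eigenvectorUnitary,
    my_charpoly_diagonal]
  rfl

lemma sum_f_eq_of_charpoly {n : Type*} [Fintype n] [DecidableEq n] {A B : Matrix n n ℂ}
    (hA : A.IsHermitian) (hB : B.IsHermitian) (α β x : ℝ)
    (h : A.charpoly * ((X - C ((α - x : ℝ) : ℂ)) * (X - C ((β + x : ℝ) : ℂ)))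
      = B.charpoly * ((X - C ((α : ℝ) : ℂ)) * (X - C ((β : ℝ) : ℂ)))) (f : ℝ → ℝ) :
    (∑ i, f (hA.eigenvalues i)) + (f (α - x) + f (β + x))
      = (∑ i, f (hB.eigenvalues i)) + (f α + f β) := by
  classical
  set mA : Multiset ℂ := Finset.univ.val.map (fun i => ((hA.eigenvalues i : ℝ) : ℂ)) with hmA
  set mB : Multiset ℂ := Finset.univ.val.map (fun i => ((hB.eigenvalues i : ℝ) : ℂ)) with hmB
  have hpA : ((mA + {((α - x : ℝ) : ℂ), ((β + x : ℝ) : ℂ)}).map (fun z => X - C z)).prod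
      = A.charpoly * ((X - C ((α - x : ℝ) : ℂ)) * (X - C ((β + x : ℝ) : ℂ))) := by
    rw [my_charpoly_hermitian hA, Finset.prod_eq_multiset_prod]
    simp [hmA, Multiset.map_map, Function.comp]
    ring
  have hpB : ((mB + {((α : ℝ) : ℂ), ((β : ℝ) : ℂ)}).map (fun z => X - C z)).prod
      = B.charpoly * ((X - C ((α : ℝ) : ℂ)) * (X - C ((β : ℝ) : ℂ))) := by
    rw [my_charpoly_hermitian hB, Finset.prod_eq_multiset_prod]
    simp [hmB, Multiset.map_map, Function.comp]
    ring
  have hprod : ((mA + {((α - x : ℝ) : ℂ), ((β + x : ℝ) : ℂ)}).map (fun z => X - C z)).prod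
      = ((mB + {((α : ℝ) : ℂ), ((β : ℝ) : ℂ)}).map (fun z => X - C z)).prod := by
    rw [hpA, hpB, h]
  have meq : mA + {((α - x : ℝ) : ℂ), ((β + x : ℝ) : ℂ)}
      = mB + {((α : ℝ) : ℂ), ((β : ℝ) : ℂ)} := by
    have := congrArg Polynomial.roots hprod
    rwa [Polynomial.roots_multiset_prod_X_sub_C, Polynomial.roots_multiset_prod_X_sub_C] at this
  have := congrArg (fun m : Multiset ℂ => (m.map (fun z : ℂ => f z.re)).sum) meq
  simp only [Multiset.map_add, Multiset.sum_add, Multiset.map_map, Function.comp,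
    Multiset.insert_eq_cons, Multiset.map_cons, Multiset.sum_cons, Multiset.map_singleton,
    Multiset.sum_singleton, Complex.ofReal_re, hmA, hmB] at this
  rw [Finset.sum_eq_multiset_sum, Finset.sum_eq_multiset_sum]
  convert this using 2 <;> ring


lemma lemA {d : ℕ} (A : Matrix (Fin d) (Fin d) ℂ) (hA : A.IsHermitian)
    (u v : Fin d → ℂ)
    (hu : ∑ j, (starRingEnd ℂ) (u j) * u j = 1)
    (hv : ∑ j, (starRingEnd ℂ) (v j) * v j = 1)
    (huv : ∑ j, (starRingEnd ℂ) (u j) * v j = 0)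
    (α β x : ℝ)
    (hAu : A.mulVec u = ((α : ℂ)) • u) (hAv : A.mulVec v = ((β : ℂ)) • v)
    {B : Matrix (Fin d) (Fin d) ℂ}
    (hBdef : B = A + ((x : ℂ)) • vecMulVec v (star v) - ((x : ℂ)) • vecMulVec u (star u))
    (hB : B.IsHermitian) (f : ℝ → ℝ) :
    (∑ i, f (hA.eigenvalues i)) + (f (α - x) + f (β + x))
      = (∑ i, f (hB.eigenvalues i)) + (f α + f β) := by
  classical
  -- conjugate of huv
  have hvu : ∑ j, (starRingEnd ℂ) (v j) * u j = 0 := by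
    have h2 := congrArg (starRingEnd ℂ) huv
    rw [map_sum, map_zero] at h2
    simpa [mul_comm] using h2
  -- d ≥ 2
  have hune : u ≠ 0 := by
    intro h0; rw [h0] at hu; simp at hu
  have hvne : v ≠ 0 := by
    intro h0; rw [h0] at hv; simp at hv
  have hd : 2 ≤ d := by
    by_contra hlt
    push_neg at hlt
    interval_cases d
    · exact hune (funext fun j => absurd j.2 (by omega))
    · obtain ⟨j0, hj0⟩ : ∃ z, u 0 ≠ 0 ∨ True := ⟨0, Or.inr trivial⟩
      have hu0 : u 0 ≠ 0 := by
        intro h0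
        rw [Fin.sum_univ_one, h0] at hu; simp at hu
      have hv0 : v 0 ≠ 0 := by
        intro h0
        rw [Fin.sum_univ_one, h0] at hv; simp at hv
      rw [Fin.sum_univ_one] at huv
      rcases mul_eq_zero.mp huv with h | h
      · exact hu0 (by simpa using h)
      · exact hv0 h
  set j0 : Fin d := ⟨0, by omega⟩ with hj0def
  set j1 : Fin d := ⟨1, by omega⟩ with hj1def
  have hj01 : j0 ≠ j1 := by
    intro h; rw [Fin.ext_iff] at h; simp [hj0def, hj1def] at h
  -- orthonormal extension
  set uE : EuclideanSpace ℂ (Fin d) := (WithLp.equiv 2 (Fin d → ℂ)).symm u with huE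
  set vE : EuclideanSpace ℂ (Fin d) := (WithLp.equiv 2 (Fin d → ℂ)).symm v with hvE
  set w : Fin d → EuclideanSpace ℂ (Fin d) :=
    fun i => if i = j0 then uE else if i = j1 then vE else 0 with hw
  have hinn : ∀ z z' : Fin d → ℂ,
      (inner ℂ ((WithLp.equiv 2 (Fin d → ℂ)).symm z) ((WithLp.equiv 2 (Fin d → ℂ)).symm z') : ℂ)
        = ∑ k, (starRingEnd ℂ) (z k) * z' k := by
    intro z z'
    rw [PiLp.inner_apply]
    simp [RCLike.inner_apply, mul_comm]
  have horth : Orthonormal ℂ (({j0, j1} : Set (Fin d)).restrict w) := by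
    rw [orthonormal_iff_ite]
    rintro ⟨i, hi⟩ ⟨j, hj⟩
    simp only [Set.mem_insert_iff, Set.mem_singleton_iff] at hi hj
    rcases hi with rfl | rfl <;> rcases hj with rfl | rfl
    · simp only [Set.restrict, Set.domRestrict, if_true, if_false, hw, if_pos rfl, if_neg hj01, if_neg (Ne.symm hj01), Subtype.mk.injEq, hj01, Ne.symm hj01, huE, hvE, hinn, hu]
    · simp only [Set.restrict, Set.domRestrict, if_true, if_false, hw, if_pos rfl, if_neg hj01, if_neg (Ne.symm hj01), Subtype.mk.injEq, hj01, Ne.symm hj01, huE, hvE, hinn, huv]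
    · simp only [Set.restrict, Set.domRestrict, if_true, if_false, hw, if_pos rfl, if_neg hj01, if_neg (Ne.symm hj01), Subtype.mk.injEq, hj01, Ne.symm hj01, huE, hvE, hinn, hvu]
    · simp only [Set.restrict, Set.domRestrict, if_true, if_false, hw, if_pos rfl, if_neg hj01, if_neg (Ne.symm hj01), Subtype.mk.injEq, hj01, Ne.symm hj01, huE, hvE, hinn, hv]
  obtain ⟨b, hb⟩ := Orthonormal.exists_orthonormalBasis_extension_of_card_eq
    (by simp) horth
  have hbu : ∀ k, (b j0) k = u k := by
    intro k
    rw [hb j0 (by simp)]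
    simp [hw, huE]
  have hbv : ∀ k, (b j1) k = v k := by
    intro k
    rw [hb j1 (by simp)]
    simp [hw, hvE, Ne.symm hj01]
  -- the unitary matrix with columns b j
  set U : Matrix (Fin d) (Fin d) ℂ := Matrix.of (fun i j => (b j) i) with hU
  have inn : ∀ i i' : Fin d, ∑ k, (starRingEnd ℂ) ((b i) k) * ((b i') k)
      = if i = i' then (1 : ℂ) else 0 := by
    intro i i'
    have := orthonormal_iff_ite.mp b.orthonormal i i'
    rw [PiLp.inner_apply] at this
    simpa [RCLike.inner_apply, mul_comm] using this
  have hUU : star U * U = 1 := by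
    ext i j
    simp only [Matrix.mul_apply, Matrix.star_apply, hU, Matrix.of_apply, Matrix.one_apply]
    simpa [Complex.star_def] using inn i j
  have key : ∀ (P : Matrix (Fin d) (Fin d) ℂ) (i j : Fin d),
      (star U * P * U) i j = ∑ k, (starRingEnd ℂ) ((b i) k) * (P.mulVec (fun l => (b j) l)) k := by
    intro P i j
    simp only [Matrix.mul_apply, Matrix.star_apply, hU, Matrix.of_apply, Matrix.mulVec,
      dotProduct, Finset.sum_mul, Finset.mul_sum]
    rw [Finset.sum_comm]
    apply Finset.sum_congr rfl
    intro k _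
    apply Finset.sum_congr rfl
    intro m _
    rw [Complex.star_def]
    ring
  set N := star U * A * U with hN
  have hermit : ∀ (z : Fin d → ℂ) (y : Fin d → ℂ),
      ∑ k, (starRingEnd ℂ) (z k) * (A.mulVec y) k
        = ∑ k, (starRingEnd ℂ) ((A.mulVec z) k) * y k := by
    intro z y
    have h1 : star z ⬝ᵥ (A *ᵥ y) = (star z ᵥ* A) ⬝ᵥ y := Matrix.dotProduct_mulVec _ _ _
    have h2 : star (A *ᵥ z) = star z ᵥ* A := by
      rw [Matrix.star_mulVec, hA.eq]
    rw [← h2] at h1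
    simpa [dotProduct, Pi.star_apply, Complex.star_def] using h1
  have rowu : ∀ j, N j0 j = (α : ℂ) * (if j0 = j then 1 else 0) := by
    intro j
    rw [hN, key]
    have e1 : ∑ k, (starRingEnd ℂ) ((b j0) k) * (A.mulVec (fun l => (b j) l)) k
        = ∑ k, (starRingEnd ℂ) (u k) * (A.mulVec (fun l => (b j) l)) k := by
      apply Finset.sum_congr rfl; intro k _; rw [hbu k]
    rw [e1, hermit u (fun l => (b j) l), hAu]
    have e2 : ∀ k, (starRingEnd ℂ) (((α : ℂ) • u) k) * (b j) k
        = (α : ℂ) * ((starRingEnd ℂ) ((b j0) k) * (b j) k) := by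
      intro k
      simp only [Pi.smul_apply, smul_eq_mul, _root_.map_mul, Complex.conj_ofReal, hbu k]
      ring
    rw [Finset.sum_congr rfl (fun k _ => e2 k), ← Finset.mul_sum, inn j0 j]
  have rowv : ∀ j, N j1 j = (β : ℂ) * (if j1 = j then 1 else 0) := by
    intro j
    rw [hN, key]
    have e1 : ∑ k, (starRingEnd ℂ) ((b j1) k) * (A.mulVec (fun l => (b j) l)) k
        = ∑ k, (starRingEnd ℂ) (v k) * (A.mulVec (fun l => (b j) l)) k := by
      apply Finset.sum_congr rfl; intro k _; rw [hbv k]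
    rw [e1, hermit v (fun l => (b j) l), hAv]
    have e2 : ∀ k, (starRingEnd ℂ) (((β : ℂ) • v) k) * (b j) k
        = (β : ℂ) * ((starRingEnd ℂ) ((b j1) k) * (b j) k) := by
      intro k
      simp only [Pi.smul_apply, smul_eq_mul, _root_.map_mul, Complex.conj_ofReal, hbv k]
      ring
    rw [Finset.sum_congr rfl (fun k _ => e2 k), ← Finset.mul_sum, inn j1 j]
  have colu : ∀ i, N i j0 = (α : ℂ) * (if i = j0 then 1 else 0) := by
    intro i
    rw [hN, key]
    have e0 : (fun l => (b j0) l) = u := funext hbu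
    rw [e0, hAu]
    have e2 : ∀ k, (starRingEnd ℂ) ((b i) k) * (((α : ℂ) • u) k)
        = (α : ℂ) * ((starRingEnd ℂ) ((b i) k) * (b j0) k) := by
      intro k
      simp only [Pi.smul_apply, smul_eq_mul, hbu k]
      ring
    rw [Finset.sum_congr rfl (fun k _ => e2 k), ← Finset.mul_sum, inn i j0]
  have colv : ∀ i, N i j1 = (β : ℂ) * (if i = j1 then 1 else 0) := by
    intro i
    rw [hN, key]
    have e0 : (fun l => (b j1) l) = v := funext hbv
    rw [e0, hAv]
    have e2 : ∀ k, (starRingEnd ℂ) ((b i) k) * (((β : ℂ) • v) k)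
        = (β : ℂ) * ((starRingEnd ℂ) ((b i) k) * (b j1) k) := by
      intro k
      simp only [Pi.smul_apply, smul_eq_mul, hbv k]
      ring
    rw [Finset.sum_congr rfl (fun k _ => e2 k), ← Finset.mul_sum, inn i j1]
  have rank1 : ∀ (z : Fin d → ℂ) (jz : Fin d), (∀ k, (b jz) k = z k) → ∀ i j,
      (star U * (vecMulVec z (star z)) * U) i j
        = (if i = jz then 1 else 0) * (if jz = j then 1 else 0) := by
    intro z jz hbz i j
    rw [key]
    have e1 : ∀ k, (starRingEnd ℂ) ((b i) k) * ((vecMulVec z (star z)).mulVec (fun l => (b j) l)) k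
        = ((starRingEnd ℂ) ((b i) k) * (b jz) k) * (∑ l, (starRingEnd ℂ) ((b jz) l) * (b j) l) := by
      intro k
      simp only [Matrix.mulVec, dotProduct, Matrix.vecMulVec_apply, Pi.star_apply,
        Complex.star_def, Finset.mul_sum]
      apply Finset.sum_congr rfl
      intro l _
      rw [hbz k, hbz l]
      ring
    rw [Finset.sum_congr rfl (fun k _ => e1 k), ← Finset.sum_mul, inn i jz, inn jz j]
  have ruu := rank1 u j0 hbu
  have rvv := rank1 v j1 hbv
  have hNB : star U * B * U = N + (x : ℂ) • (star U * (vecMulVec v (star v)) * U)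
      - (x : ℂ) • (star U * (vecMulVec u (star u)) * U) := by
    rw [hBdef]
    simp only [mul_add, add_mul, mul_sub, sub_mul, mul_smul_comm, smul_mul_assoc, hN]
  -- reindexing equivalence
  have hsum2 : 2 + (d - 2) = d := by omega
  set e : Fin 2 ⊕ Fin (d - 2) ≃ Fin d := finSumFinEquiv.trans (finCongr hsum2) with he
  have heL : ∀ i2 : Fin 2, (e (Sum.inl i2) : ℕ) = (i2 : ℕ) := by
    intro i2; simp [he]
  have heR : ∀ jr : Fin (d - 2), (e (Sum.inr jr) : ℕ) = 2 + (jr : ℕ) := by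
    intro jr; simp [he]
  have he0 : e (Sum.inl 0) = j0 := by
    apply Fin.ext; rw [heL]; simp [hj0def]
  have he1 : e (Sum.inl 1) = j1 := by
    apply Fin.ext; rw [heL]; simp [hj1def]
  have her0 : ∀ jr : Fin (d - 2), e (Sum.inr jr) ≠ j0 := by
    intro jr h
    have := congrArg Fin.val h
    rw [heR] at this; simp [hj0def] at this
  have her1 : ∀ jr : Fin (d - 2), e (Sum.inr jr) ≠ j1 := by
    intro jr h
    have := congrArg Fin.val h
    rw [heR] at this; simp [hj1def] at this; omega
  set Q := N.submatrix (e ∘ Sum.inr) (e ∘ Sum.inr) with hQ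
  have hblockA : N.submatrix e e
      = Matrix.fromBlocks (Matrix.diagonal ![(α : ℂ), (β : ℂ)]) 0 0 Q := by
    ext i j
    rcases i with i2 | ir <;> rcases j with j2 | jr
    · fin_cases i2 <;> fin_cases j2 <;>
        simp [Matrix.submatrix_apply, he0, he1, rowu, rowv, hj01, Ne.symm hj01]
    · fin_cases i2 <;>
        simp [Matrix.submatrix_apply, he0, he1, rowu, rowv,
          Ne.symm (her0 jr), Ne.symm (her1 jr)]
    · fin_cases j2 <;>
        simp [Matrix.submatrix_apply, he0, he1, colu, colv, her0 ir, her1 ir]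
    · simp [Matrix.submatrix_apply, hQ]
  have hblockB : (star U * B * U).submatrix e e
      = Matrix.fromBlocks (Matrix.diagonal ![((α - x : ℝ) : ℂ), ((β + x : ℝ) : ℂ)]) 0 0 Q := by
    ext i j
    rcases i with i2 | ir <;> rcases j with j2 | jr
    · fin_cases i2 <;> fin_cases j2 <;>
        simp [Matrix.submatrix_apply, hNB, Matrix.add_apply, Matrix.sub_apply,
          Matrix.smul_apply, he0, he1, rowu, rowv, ruu, rvv, hj01, Ne.symm hj01] <;>
        push_cast <;> ring
    · fin_cases i2 <;>
        simp [Matrix.submatrix_apply, hNB, Matrix.add_apply, Matrix.sub_apply,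
          Matrix.smul_apply, he0, he1, rowu, rowv, ruu, rvv, hj01, Ne.symm hj01,
          Ne.symm (her0 jr), Ne.symm (her1 jr), her0 jr, her1 jr]
    · fin_cases j2 <;>
        simp [Matrix.submatrix_apply, hNB, Matrix.add_apply, Matrix.sub_apply,
          Matrix.smul_apply, he0, he1, colu, colv, ruu, rvv, hj01, Ne.symm hj01,
          Ne.symm (her0 ir), Ne.symm (her1 ir), her0 ir, her1 ir]
    · simp [Matrix.submatrix_apply, hNB, Matrix.add_apply, Matrix.sub_apply,
        Matrix.smul_apply, hQ, ruu, rvv,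
        her0 ir, her1 ir, Ne.symm (her0 jr), Ne.symm (her1 jr), her0 jr, her1 jr]
  have hsub : ∀ M : Matrix (Fin d) (Fin d) ℂ, (M.submatrix e e).charpoly = M.charpoly := by
    intro M
    have : M.submatrix e e = Matrix.reindex e.symm e.symm M := by
      rw [Matrix.reindex_apply]; simp
    rw [this, Matrix.charpoly_reindex]
  have cA : A.charpoly = ((X - C ((α : ℝ) : ℂ)) * (X - C ((β : ℝ) : ℂ))) * Q.charpoly := by
    rw [← my_charpoly_conj U A hUU, ← hN, ← hsub N, hblockA,
      Matrix.charpoly_fromBlocks_zero₂₁, my_charpoly_diagonal, Fin.prod_univ_two]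
    simp
  have cB : B.charpoly = ((X - C ((α - x : ℝ) : ℂ)) * (X - C ((β + x : ℝ) : ℂ))) * Q.charpoly := by
    rw [← my_charpoly_conj U B hUU, ← hsub (star U * B * U), hblockB,
      Matrix.charpoly_fromBlocks_zero₂₁, my_charpoly_diagonal, Fin.prod_univ_two]
    simp
  have hfinal : A.charpoly * ((X - C ((α - x : ℝ) : ℂ)) * (X - C ((β + x : ℝ) : ℂ)))
      = B.charpoly * ((X - C ((α : ℝ) : ℂ)) * (X - C ((β : ℝ) : ℂ))) := by
    rw [cA, cB]; ring
  exact sum_f_eq_of_charpoly hA hB α β x hfinal f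


lemma hermit_dot {d : ℕ} {A : Matrix (Fin d) (Fin d) ℂ} (hA : A.IsHermitian)
    (z y : Fin d → ℂ) :
    ∑ k1, (starRingEnd ℂ) (z k1) * (A.mulVec y) k1
      = ∑ k1, (starRingEnd ℂ) ((A.mulVec z) k1) * y k1 := by
  have h1 : star z ⬝ᵥ (A *ᵥ y) = (star z ᵥ* A) ⬝ᵥ y := Matrix.dotProduct_mulVec _ _ _
  have h2 : star (A *ᵥ z) = star z ᵥ* A := by
    rw [Matrix.star_mulVec, hA.eq]
  rw [← h2] at h1
  simpa [dotProduct, Pi.star_apply, Complex.star_def] using h1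

lemma frameOp_isHermitian {d n : ℕ} (F : Fin n → Fin d → ℂ) : (frameOp F).IsHermitian := by
  unfold frameOp
  show (∑ l, Matrix.vecMulVec (F l) (star (F l)))ᴴ = _
  rw [Matrix.conjTranspose_sum]
  apply Finset.sum_congr rfl
  intro l _
  ext i j
  simp [Matrix.conjTranspose_apply, Matrix.vecMulVec_apply, Pi.star_apply, mul_comm]

lemma normSqVec_cast {d : ℕ} (w : Fin d → ℂ) :
    ((normSqVec w : ℝ) : ℂ) = ∑ j, (starRingEnd ℂ) (w j) * w j := by
  unfold normSqVec
  rw [Complex.ofReal_sum]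
  apply Finset.sum_congr rfl
  intro j _
  rw [mul_comm]
  exact (Complex.mul_conj _).symm

lemma sum_f_sortDesc {m : ℕ} (w : Fin m → ℝ) (f : ℝ → ℝ) :
    ∑ i, f (sortDesc w i) = ∑ i, f (w i) := by
  unfold sortDesc
  have h1 : ∀ i : Fin m, f ((w ∘ Tuple.sort w) i.rev)
      = (f ∘ w) ((Fin.revPerm.trans (Tuple.sort w)) i) := by
    intro i
    simp [Equiv.trans_apply]
  rw [Finset.sum_congr rfl (fun i _ => h1 i)]
  exact Equiv.sum_comp (Fin.revPerm.trans (Tuple.sort w)) (f ∘ w)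

lemma potential_eq_sum {d : ℕ} {S : Matrix (Fin d) (Fin d) ℂ} (hS : S.IsHermitian) (f : ℝ → ℝ) :
    potential f S = ∑ i, f (hS.eigenvalues i) := by
  unfold potential eigsDesc
  rw [dif_pos hS]
  exact sum_f_sortDesc _ f

lemma key_ineq {d n₀ k : ℕ} (F₀ : Fin n₀ → Fin d → ℂ) (a : Fin k → ℝ)
    (ha_pos : ∀ i, 0 < a i)
    (f : ℝ → ℝ) (hf : StrictConvexOn ℝ (Set.Ici 0) f)
    (G : Fin k → Fin d → ℂ) (hG : ∀ i, normSqVec (G i) = a i)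
    (hmin : ∀ G' : Fin k → Fin d → ℂ, (∀ i, normSqVec (G' i) = a i) →
      potential f (frameOp F₀ + frameOp G) ≤ potential f (frameOp F₀ + frameOp G'))
    (ci cr : ℝ) (hcc : cr < ci) (hcr0 : 0 < cr) (h l : Fin k)
    (Hh : (frameOp F₀ + frameOp G).mulVec (G h) = (ci : ℂ) • G h)
    (Hl : (frameOp F₀ + frameOp G).mulVec (G l) = (cr : ℂ) • G l) :
    ci - cr ≤ a h - a l := by
  by_contra hcon
  push_neg at hcon
  set S := frameOp F₀ + frameOp G with hSdef
  have hS : S.IsHermitian := Matrix.IsHermitian.add (frameOp_isHermitian F₀) (frameOp_isHermitian G)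
  have hΔ : 0 < ci - cr := by linarith
  have hcine : ((ci : ℂ)) ≠ ((cr : ℂ)) := by
    intro hcc2
    rw [Complex.ofReal_inj] at hcc2
    linarith
  have hGh : ((a h : ℝ) : ℂ) = ∑ j, (starRingEnd ℂ) (G h j) * G h j := by
    rw [← hG h, normSqVec_cast]
  have hGl : ((a l : ℝ) : ℂ) = ∑ j, (starRingEnd ℂ) (G l j) * G l j := by
    rw [← hG l, normSqVec_cast]
  have hhl : h ≠ l := by
    intro hh
    rw [hh] at Hh
    rw [Hh] at Hl
    have hz : ((ci : ℂ) - (cr : ℂ)) • G l = 0 := by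
      rw [sub_smul, Hl]; abel
    rcases smul_eq_zero.mp hz with h0 | h0
    · exact hcine (sub_eq_zero.mp h0)
    · have : normSqVec (G l) = 0 := by rw [h0]; simp [normSqVec]
      rw [hG l] at this
      linarith [ha_pos l]
  -- orthogonality of G h and G l
  have hdd : ∑ j, (starRingEnd ℂ) (G h j) * G l j = 0 := by
    have h1 := hermit_dot hS (G h) (G l)
    rw [Hh, Hl] at h1
    have h2 : (cr : ℂ) * (∑ j, (starRingEnd ℂ) (G h j) * G l j)
        = (ci : ℂ) * (∑ j, (starRingEnd ℂ) (G h j) * G l j) := by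
      rw [Finset.mul_sum, Finset.mul_sum]
      have l1 : ∀ j : Fin d, (cr : ℂ) * ((starRingEnd ℂ) (G h j) * G l j)
          = (starRingEnd ℂ) (G h j) * ((cr : ℂ) • G l) j := by
        intro j
        simp only [Pi.smul_apply, smul_eq_mul]
        ring
      have l2 : ∀ j : Fin d, (ci : ℂ) * ((starRingEnd ℂ) (G h j) * G l j)
          = (starRingEnd ℂ) (((ci : ℂ) • G h) j) * G l j := by
        intro j
        simp only [Pi.smul_apply, smul_eq_mul, _root_.map_mul, Complex.conj_ofReal]
        ring
      rw [Finset.sum_congr rfl (fun j _ => l1 j), Finset.sum_congr rfl (fun j _ => l2 j)]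
      exact h1
    have h3 : ((ci : ℂ) - (cr : ℂ)) * (∑ j, (starRingEnd ℂ) (G h j) * G l j) = 0 := by
      rw [sub_mul, h2]; ring
    rcases mul_eq_zero.mp h3 with h0 | h0
    · exact absurd (sub_eq_zero.mp h0) hcine
    · exact h0
  set t := a h - a l with ht
  set x := min (a h) ((max t 0 + (ci - cr)) / 2) with hxdef
  have hmaxlt : max t 0 < ci - cr := max_lt hcon hΔ
  have hxΔ : x < ci - cr := by
    apply lt_of_le_of_lt (min_le_right _ _)
    linarith
  have hxah : x ≤ a h := min_le_left _ _
  have htx : t < x := by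
    apply lt_min
    · rw [ht]; linarith [ha_pos l]
    · linarith [le_max_left t 0]
  have hx0 : 0 < x := by
    apply lt_min (ha_pos h)
    linarith [le_max_right t 0]
  have h2xt : 0 < 2 * x - t := by linarith
  set d1 := a h - x with hd1def
  set d2 := a l + x with hd2def
  have hd1nn : 0 ≤ d1 := by rw [hd1def]; linarith
  have hd2nn : 0 ≤ d2 := by rw [hd2def]; linarith [ha_pos l]
  set cc2 := (x - t) / (2 * x - t) with hcc2def
  set ss2 := x / (2 * x - t) with hss2def
  have hcc2nn : 0 ≤ cc2 := by
    rw [hcc2def]; apply div_nonneg <;> linarith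
  have hss2nn : 0 ≤ ss2 := by
    rw [hss2def]; apply div_nonneg <;> linarith
  have hsum1 : cc2 + ss2 = 1 := by
    rw [hcc2def, hss2def]
    have hden : x * 2 - t ≠ 0 := (by linarith : (0:ℝ) < x * 2 - t).ne'
    field_simp
    ring
  set cc := Real.sqrt cc2 with hccdef
  set ss := Real.sqrt ss2 with hssdef
  set sd1 := Real.sqrt d1 with hsd1def
  set sd2 := Real.sqrt d2 with hsd2def
  set su := Real.sqrt (a h) with hsudef
  set sl := Real.sqrt (a l) with hsldef
  have hccsq : cc ^ 2 = cc2 := Real.sq_sqrt hcc2nn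
  have hsssq : ss ^ 2 = ss2 := Real.sq_sqrt hss2nn
  have hsd1sq : sd1 ^ 2 = d1 := Real.sq_sqrt hd1nn
  have hsd2sq : sd2 ^ 2 = d2 := Real.sq_sqrt hd2nn
  have hsusq : su ^ 2 = a h := Real.sq_sqrt (le_of_lt (ha_pos h))
  have hslsq : sl ^ 2 = a l := Real.sq_sqrt (le_of_lt (ha_pos l))
  have hsune : su ≠ 0 := by
    rw [hsudef]
    exact ne_of_gt (Real.sqrt_pos.mpr (ha_pos h))
  have hslne : sl ≠ 0 := by
    rw [hsldef]
    exact ne_of_gt (Real.sqrt_pos.mpr (ha_pos l))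
  set A1 := sd1 * cc with hA1def
  set B1 := sd2 * ss with hB1def
  set A2 := -(sd1 * ss) with hA2def
  set B2 := sd2 * cc with hB2def
  have hA12 : A1 ^ 2 + A2 ^ 2 = a h - x := by
    have e : A1 ^ 2 + A2 ^ 2 = sd1 ^ 2 * (cc ^ 2 + ss ^ 2) := by
      rw [hA1def, hA2def]; ring
    rw [e, hsd1sq, hccsq, hsssq, hsum1, mul_one, hd1def]
  have hB12 : B1 ^ 2 + B2 ^ 2 = a l + x := by
    have e : B1 ^ 2 + B2 ^ 2 = sd2 ^ 2 * (cc ^ 2 + ss ^ 2) := by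
      rw [hB1def, hB2def]; ring
    rw [e, hsd2sq, hccsq, hsssq, hsum1, mul_one, hd2def]
  have hcross : A1 * B1 + A2 * B2 = 0 := by
    rw [hA1def, hA2def, hB1def, hB2def]; ring
  have hn1 : A1 ^ 2 + B1 ^ 2 = a h := by
    have e : A1 ^ 2 + B1 ^ 2 = d1 * cc2 + d2 * ss2 := by
      rw [hA1def, hB1def]
      have e1 : (sd1 * cc) ^ 2 = sd1 ^ 2 * cc ^ 2 := by ring
      have e2 : (sd2 * ss) ^ 2 = sd2 ^ 2 * ss ^ 2 := by ring
      rw [e1, e2, hsd1sq, hsd2sq, hccsq, hsssq]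
    rw [e, hcc2def, hss2def, hd1def, hd2def, ht]
    have hden : x * 2 - (a h - a l) ≠ 0 := by rw [← ht]; exact (by linarith : (0:ℝ) < x * 2 - t).ne'
    field_simp
    ring
  have hn2 : A2 ^ 2 + B2 ^ 2 = a l := by
    have e : A2 ^ 2 + B2 ^ 2 = d1 * ss2 + d2 * cc2 := by
      rw [hA2def, hB2def]
      have e1 : (-(sd1 * ss)) ^ 2 = sd1 ^ 2 * ss ^ 2 := by ring
      have e2 : (sd2 * cc) ^ 2 = sd2 ^ 2 * cc ^ 2 := by ring
      rw [e1, e2, hsd1sq, hsd2sq, hccsq, hsssq]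
    rw [e, hcc2def, hss2def, hd1def, hd2def, ht]
    have hden : x * 2 - (a h - a l) ≠ 0 := by rw [← ht]; exact (by linarith : (0:ℝ) < x * 2 - t).ne'
    field_simp
    ring
  -- normalized eigenvectors
  set u : Fin d → ℂ := fun j => ((su⁻¹ : ℝ) : ℂ) * G h j with hudef
  set v : Fin d → ℂ := fun j => ((sl⁻¹ : ℝ) : ℂ) * G l j with hvdef
  have hGhu : ∀ j, G h j = ((su : ℝ) : ℂ) * u j := by
    intro j
    rw [hudef]
    rw [← mul_assoc, ← Complex.ofReal_mul, mul_inv_cancel₀ hsune]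
    simp
  have hGlv : ∀ j, G l j = ((sl : ℝ) : ℂ) * v j := by
    intro j
    rw [hvdef]
    rw [← mul_assoc, ← Complex.ofReal_mul, mul_inv_cancel₀ hslne]
    simp
  have hu1 : ∑ j, (starRingEnd ℂ) (u j) * u j = 1 := by
    have e : ∀ j, (starRingEnd ℂ) (u j) * u j
        = ((su⁻¹ : ℝ) : ℂ) ^ 2 * ((starRingEnd ℂ) (G h j) * G h j) := by
      intro j
      rw [hudef]
      simp only [_root_.map_mul, Complex.conj_ofReal]
      ring
    rw [Finset.sum_congr rfl (fun j _ => e j), ← Finset.mul_sum, ← hGh]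
    rw [← Complex.ofReal_pow, ← Complex.ofReal_mul, inv_pow, hsusq,
      inv_mul_cancel₀ (ne_of_gt (ha_pos h))]
    simp
  have hv1 : ∑ j, (starRingEnd ℂ) (v j) * v j = 1 := by
    have e : ∀ j, (starRingEnd ℂ) (v j) * v j
        = ((sl⁻¹ : ℝ) : ℂ) ^ 2 * ((starRingEnd ℂ) (G l j) * G l j) := by
      intro j
      rw [hvdef]
      simp only [_root_.map_mul, Complex.conj_ofReal]
      ring
    rw [Finset.sum_congr rfl (fun j _ => e j), ← Finset.mul_sum, ← hGl]
    rw [← Complex.ofReal_pow, ← Complex.ofReal_mul, inv_pow, hslsq,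
      inv_mul_cancel₀ (ne_of_gt (ha_pos l))]
    simp
  have huv0 : ∑ j, (starRingEnd ℂ) (u j) * v j = 0 := by
    have e : ∀ j, (starRingEnd ℂ) (u j) * v j
        = (((su⁻¹ : ℝ) : ℂ) * ((sl⁻¹ : ℝ) : ℂ)) * ((starRingEnd ℂ) (G h j) * G l j) := by
      intro j
      rw [hudef, hvdef]
      simp only [_root_.map_mul, Complex.conj_ofReal]
      ring
    rw [Finset.sum_congr rfl (fun j _ => e j), ← Finset.mul_sum, hdd, mul_zero]
  have hvu0 : ∑ j, (starRingEnd ℂ) (v j) * u j = 0 := by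
    have h2 := congrArg (starRingEnd ℂ) huv0
    rw [map_sum, map_zero] at h2
    rw [← h2]
    apply Finset.sum_congr rfl
    intro j _
    simp only [_root_.map_mul, RingHomCompTriple.comp_apply, RingHom.id_apply,
      Complex.conj_conj]
    ring
  have hSu : S.mulVec u = (ci : ℂ) • u := by
    have e : u = ((su⁻¹ : ℝ) : ℂ) • G h := by
      funext j; rw [hudef]; simp
    rw [e, Matrix.mulVec_smul, Hh, smul_comm]
  have hSv : S.mulVec v = (cr : ℂ) • v := by
    have e : v = ((sl⁻¹ : ℝ) : ℂ) • G l := by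
      funext j; rw [hvdef]; simp
    rw [e, Matrix.mulVec_smul, Hl, smul_comm]
  -- the perturbed completion
  set gh' : Fin d → ℂ := fun j => ((A1 : ℝ) : ℂ) * u j + ((B1 : ℝ) : ℂ) * v j with hghdef
  set gl' : Fin d → ℂ := fun j => ((A2 : ℝ) : ℂ) * u j + ((B2 : ℝ) : ℂ) * v j with hgldef
  set G' : Fin k → Fin d → ℂ := Function.update (Function.update G h gh') l gl' with hG'def
  have hG'h : G' h = gh' := by
    rw [hG'def, Function.update_of_ne hhl, Function.update_self]
  have hG'l : G' l = gl' := by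
    rw [hG'def, Function.update_self]
  have hG'other : ∀ i2 : Fin k, i2 ≠ h → i2 ≠ l → G' i2 = G i2 := by
    intro i2 h2 h3
    rw [hG'def, Function.update_of_ne h3, Function.update_of_ne h2]
  have normcomp : ∀ (P R : ℝ), normSqVec (fun j => ((P : ℝ) : ℂ) * u j + ((R : ℝ) : ℂ) * v j)
      = P ^ 2 + R ^ 2 := by
    intro P R
    have e : ((normSqVec (fun j => ((P : ℝ) : ℂ) * u j + ((R : ℝ) : ℂ) * v j) : ℝ) : ℂ)
        = ((P ^ 2 + R ^ 2 : ℝ) : ℂ) := by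
      rw [normSqVec_cast]
      have expand : ∀ j : Fin d, (starRingEnd ℂ) (((P : ℝ) : ℂ) * u j + ((R : ℝ) : ℂ) * v j)
          * (((P : ℝ) : ℂ) * u j + ((R : ℝ) : ℂ) * v j)
          = ((P : ℝ) : ℂ) ^ 2 * ((starRingEnd ℂ) (u j) * u j)
            + (((P : ℝ) : ℂ) * ((R : ℝ) : ℂ)) * ((starRingEnd ℂ) (u j) * v j)
            + (((P : ℝ) : ℂ) * ((R : ℝ) : ℂ)) * ((starRingEnd ℂ) (v j) * u j)
            + ((R : ℝ) : ℂ) ^ 2 * ((starRingEnd ℂ) (v j) * v j) := by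
        intro j
        simp only [map_add, _root_.map_mul, Complex.conj_ofReal]
        ring
      rw [Finset.sum_congr rfl (fun j _ => expand j)]
      rw [Finset.sum_add_distrib, Finset.sum_add_distrib, Finset.sum_add_distrib]
      rw [← Finset.mul_sum, ← Finset.mul_sum, ← Finset.mul_sum, ← Finset.mul_sum]
      rw [hu1, hv1, huv0, hvu0]
      push_cast
      ring
    exact Complex.ofReal_inj.mp e
  have hG'norm : ∀ i2, normSqVec (G' i2) = a i2 := by
    intro i2
    by_cases h2 : i2 = l
    · rw [h2, hG'l, hgldef, normcomp, hn2]
    · by_cases h3 : i2 = h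
      · rw [h3, hG'h, hghdef, normcomp, hn1]
      · rw [hG'other i2 h3 h2, hG i2]
  -- frame operator identity
  have hsplit : ∀ H : Fin k → Fin d → ℂ, frameOp H
      = Matrix.vecMulVec (H h) (star (H h)) + Matrix.vecMulVec (H l) (star (H l))
        + ∑ i2 ∈ (Finset.univ.erase h).erase l, Matrix.vecMulVec (H i2) (star (H i2)) := by
    intro H
    have hlmem : l ∈ Finset.univ.erase h :=
      Finset.mem_erase.mpr ⟨Ne.symm hhl, Finset.mem_univ l⟩
    unfold frameOp
    rw [← Finset.add_sum_erase _ _ (Finset.mem_univ h), ← Finset.add_sum_erase _ _ hlmem,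
      ← add_assoc]
  have hrest : ∑ i2 ∈ (Finset.univ.erase h).erase l, Matrix.vecMulVec (G' i2) (star (G' i2))
      = ∑ i2 ∈ (Finset.univ.erase h).erase l, Matrix.vecMulVec (G i2) (star (G i2)) := by
    apply Finset.sum_congr rfl
    intro i2 hi2
    rw [Finset.mem_erase] at hi2
    obtain ⟨h2, hi3⟩ := hi2
    rw [Finset.mem_erase] at hi3
    rw [hG'other i2 hi3.1 h2]
  -- casted identities
  have cA12 : ((A1 : ℝ) : ℂ) ^ 2 + ((A2 : ℝ) : ℂ) ^ 2 = ((a h : ℝ) : ℂ) - ((x : ℝ) : ℂ) := by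
    rw [← Complex.ofReal_pow, ← Complex.ofReal_pow, ← Complex.ofReal_add, hA12]
    push_cast; ring
  have cB12 : ((B1 : ℝ) : ℂ) ^ 2 + ((B2 : ℝ) : ℂ) ^ 2 = ((a l : ℝ) : ℂ) + ((x : ℝ) : ℂ) := by
    rw [← Complex.ofReal_pow, ← Complex.ofReal_pow, ← Complex.ofReal_add, hB12]
    push_cast; ring
  have cCross : ((A1 : ℝ) : ℂ) * ((B1 : ℝ) : ℂ) + ((A2 : ℝ) : ℂ) * ((B2 : ℝ) : ℂ) = 0 := by
    rw [← Complex.ofReal_mul, ← Complex.ofReal_mul, ← Complex.ofReal_add, hcross]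
    simp
  have cSu2 : ((su : ℝ) : ℂ) ^ 2 = ((a h : ℝ) : ℂ) := by
    rw [← Complex.ofReal_pow, hsusq]
  have cSl2 : ((sl : ℝ) : ℂ) ^ 2 = ((a l : ℝ) : ℂ) := by
    rw [← Complex.ofReal_pow, hslsq]
  have hkey2 : Matrix.vecMulVec gh' (star gh') + Matrix.vecMulVec gl' (star gl')
      = Matrix.vecMulVec (G h) (star (G h)) + Matrix.vecMulVec (G l) (star (G l))
        + ((x : ℝ) : ℂ) • Matrix.vecMulVec v (star v)
        - ((x : ℝ) : ℂ) • Matrix.vecMulVec u (star u) := by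
    ext i2 j2
    simp only [Matrix.add_apply, Matrix.sub_apply, Matrix.smul_apply, Matrix.vecMulVec_apply,
      Pi.star_apply, Complex.star_def, smul_eq_mul]
    rw [hghdef, hgldef]
    simp only [map_add, _root_.map_mul, Complex.conj_ofReal]
    rw [hGhu i2, hGhu j2, hGlv i2, hGlv j2]
    simp only [_root_.map_mul, Complex.conj_ofReal]
    linear_combination (u i2 * (starRingEnd ℂ) (u j2)) * cA12
      + (v i2 * (starRingEnd ℂ) (v j2)) * cB12
      + (u i2 * (starRingEnd ℂ) (v j2) + v i2 * (starRingEnd ℂ) (u j2)) * cCross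
      - (u i2 * (starRingEnd ℂ) (u j2)) * cSu2 - (v i2 * (starRingEnd ℂ) (v j2)) * cSl2
  have hF' : frameOp G' = frameOp G + ((x : ℝ) : ℂ) • Matrix.vecMulVec v (star v)
      - ((x : ℝ) : ℂ) • Matrix.vecMulVec u (star u) := by
    rw [hsplit G', hsplit G, hrest, hG'h, hG'l, hkey2]
    abel
  have hS'eq : frameOp F₀ + frameOp G' = S + ((x : ℝ) : ℂ) • Matrix.vecMulVec v (star v)
      - ((x : ℝ) : ℂ) • Matrix.vecMulVec u (star u) := by
    rw [hF', hSdef]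
    abel
  have hS' : (frameOp F₀ + frameOp G').IsHermitian :=
    Matrix.IsHermitian.add (frameOp_isHermitian F₀) (frameOp_isHermitian G')
  have hmain := lemA S hS u v hu1 hv1 huv0 ci cr x hSu hSv hS'eq hS' f
  have hP1 : potential f S = ∑ i, f (hS.eigenvalues i) := potential_eq_sum hS f
  have hP2 : potential f (frameOp F₀ + frameOp G') = ∑ i, f (hS'.eigenvalues i) :=
    potential_eq_sum hS' f
  have hconv : f (ci - x) + f (cr + x) < f ci + f cr := by
    set s0 := x / (ci - cr) with hs0def
    have hs0 : 0 < s0 := div_pos hx0 hΔ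
    have hs1 : s0 < 1 := (div_lt_one hΔ).mpr hxΔ
    have e1 : (1 - s0) * ci + s0 * cr = ci - x := by
      rw [hs0def]
      field_simp
      ring
    have e2 : s0 * ci + (1 - s0) * cr = cr + x := by
      rw [hs0def]
      field_simp
      ring
    have m1 : ci ∈ Set.Ici (0 : ℝ) := by
      simp only [Set.mem_Ici]; linarith
    have m2 : cr ∈ Set.Ici (0 : ℝ) := by
      simp only [Set.mem_Ici]; linarith
    have hne : ci ≠ cr := ne_of_gt hcc
    have c1 := hf.2 m1 m2 hne (by linarith : (0 : ℝ) < 1 - s0) hs0 (by ring)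
    have c2 := hf.2 m1 m2 hne hs0 (by linarith : (0 : ℝ) < 1 - s0) (by ring)
    simp only [smul_eq_mul] at c1 c2
    rw [e1] at c1
    rw [e2] at c2
    linarith
  have hfin := hmin G' hG'norm
  rw [hP1, hP2] at hfin
  linarith


end AuxSpectral

theorem stmt_17 {d n₀ k : ℕ} (hdk : d ≤ k)
    (F₀ : Fin n₀ → Fin d → ℂ) (a : Fin k → ℝ)
    (ha_pos : ∀ i, 0 < a i) (ha_mono : Antitone a)
    (f : ℝ → ℝ) (hf : StrictConvexOn ℝ (Set.Ici 0) f) (hf0 : ∀ x ∈ Set.Ici (0 : ℝ), 0 ≤ f x)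
    (G : Fin k → Fin d → ℂ) (hG : ∀ i, normSqVec (G i) = a i)
    (hmin : ∀ G' : Fin k → Fin d → ℂ, (∀ i, normSqVec (G' i) = a i) →
      potential f (frameOp F₀ + frameOp G) ≤ potential f (frameOp F₀ + frameOp G'))
    (lam μ : Fin d → ℝ) (hlam : lam = eigsAsc (frameOp F₀)) (hμ : μ = eigsDesc (frameOp G))
    (hop : eigsDesc (frameOp F₀ + frameOp G) = sortDesc (fun i => lam i + μ i))
    (p : ℕ) (hp1 : 1 < p) (c : Fin p → ℝ) (hcanti : StrictAnti c) (hcpos : ∀ j, 0 < c j)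
    (hJcover : ∀ l : Fin k, ∃ j : Fin p,
      (frameOp F₀ + frameOp G).mulVec (G l) = (c j : ℂ) • G l) :
    (∀ i r : Fin p, i < r → ∀ h l : Fin k,
      (frameOp F₀ + frameOp G).mulVec (G h) = (c i : ℂ) • G h →
      (frameOp F₀ + frameOp G).mulVec (G l) = (c r : ℂ) • G l →
      (c i - c r ≤ a h - a l ∧ 0 < c i - c r ∧ h < l)) ∧
    (∀ j : Fin p, ∀ l₁ l₂ l₃ : Fin k, l₁ ≤ l₂ → l₂ ≤ l₃ →
      (frameOp F₀ + frameOp G).mulVec (G l₁) = (c j : ℂ) • G l₁ →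
      (frameOp F₀ + frameOp G).mulVec (G l₃) = (c j : ℂ) • G l₃ →
      (frameOp F₀ + frameOp G).mulVec (G l₂) = (c j : ℂ) • G l₂) := by
  have P1 : ∀ i r : Fin p, i < r → ∀ h l : Fin k,
      (frameOp F₀ + frameOp G).mulVec (G h) = (c i : ℂ) • G h →
      (frameOp F₀ + frameOp G).mulVec (G l) = (c r : ℂ) • G l →
      (c i - c r ≤ a h - a l ∧ 0 < c i - c r ∧ h < l) := by
    intro i r hir h l Hh Hl
    have hcc : c r < c i := hcanti hir
    have key1 := key_ineq F₀ a ha_pos f hf G hG hmin (c i) (c r) hcc (hcpos r) h l Hh Hl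
    refine ⟨key1, by linarith, ?_⟩
    by_contra hle
    push_neg at hle
    have hmono := ha_mono hle
    linarith
  refine ⟨P1, ?_⟩
  intro j l₁ l₂ l₃ h12 h23 H1 H3
  obtain ⟨j', Hj'⟩ := hJcover l₂
  rcases lt_trichotomy j' j with hlt | heq | hgt
  · have := (P1 j' j hlt l₂ l₁ Hj' H1).2.2
    exact absurd h12 (not_le_of_gt this)
  · rw [heq] at Hj'
    exact Hj'
  · have := (P1 j j' hgt l₃ l₂ H3 Hj').2.2
    exact absurd h23 (not_le_of_gt this)
end

section
/- Let λ = (λ_1 ≤ … ≤ λ_d) ∈ ℝ_{≥0}^d be non-decreasing, let a = (a_1 ≥ … ≥ a_k) ∈ ℝ_{>0}^k be non-increasing with k ≥ d, and let m ∈ {1,…,d}. Then (a_1,…,a_m) ≺ (P_m − λ_1, P_m − λ_2, …, P_m − λ_m) if and only if P_m ≥ P_i for every i ∈ {1,…,m}, i.e., if and only if P_m = max_{1 ≤ i ≤ m} P_i. -/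
open Finset
open scoped ComplexOrder

lemma sortDesc_eq_of_antitone {m : ℕ} {x : Fin m → ℝ} (hx : Antitone x) :
    sortDesc x = x := by
  have hmono : Monotone (x ∘ (Fin.revPerm : Equiv.Perm (Fin m))) := by
    intro i j hij
    exact hx (by simpa using Fin.rev_le_rev.mpr hij)
  have h := (Tuple.comp_sort_eq_comp_iff_monotone (σ := Fin.revPerm)).mpr hmono
  funext i
  have := congrFun h.symm i.rev
  simpa [sortDesc, Function.comp] using this

lemma sum_fin_ite_lt {d : ℕ} (g : Fin d → ℝ) (g' : ℕ → ℝ)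
    (hg : ∀ i : Fin d, g' (i : ℕ) = g i) (t : ℕ) (ht : t ≤ d) :
    (∑ i : Fin d, if (i : ℕ) < t then g i else 0) = ∑ n ∈ Finset.range t, g' n := by
  have h1 : (∑ i : Fin d, if (i : ℕ) < t then g i else 0)
      = ∑ i : Fin d, (fun n => if n < t then g' n else 0) (i : ℕ) := by
    refine Finset.sum_congr rfl fun i _ => ?_
    simp [hg i]
  rw [h1, Fin.sum_univ_eq_sum_range (fun n => if n < t then g' n else 0) d,
    ← Finset.sum_filter]
  congr 1
  ext n
  simp only [Finset.mem_filter, Finset.mem_range]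
  omega

theorem stmt_19 {d k : ℕ} (hdk : d ≤ k)
    (lam : Fin d → ℝ) (hlam : Monotone lam) (hlam0 : ∀ i, 0 ≤ lam i)
    (a : Fin k → ℝ) (ha_pos : ∀ i, 0 < a i) (ha_mono : Antitone a)
    (m : ℕ) (hm1 : 1 ≤ m) (hmd : m ≤ d) :
    MajorizedBy (fun i : Fin m => a (Fin.castLE (le_trans hmd hdk) i))
        (fun i : Fin m => initAvg lam a 0 m - lam (Fin.castLE hmd i)) ↔
      ∀ i, 1 ≤ i → i ≤ m → initAvg lam a 0 i ≤ initAvg lam a 0 m := by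
  classical
  set lam' : ℕ → ℝ := fun n => if h : n < d then lam ⟨n, h⟩ else 0 with hlam'
  set a' : ℕ → ℝ := fun n => if h : n < k then a ⟨n, h⟩ else 0 with ha'
  have hlam'v : ∀ i : Fin d, lam' (i : ℕ) = lam i := fun i => by simp [hlam']
  have ha'v : ∀ i : Fin k, a' (i : ℕ) = a i := fun i => by simp [ha']
  set L : ℕ → ℝ := fun t => ∑ n ∈ Finset.range t, lam' n with hL
  set A : ℕ → ℝ := fun t => ∑ n ∈ Finset.range t, a' n with hA
  -- initAvg formula
  have hinit : ∀ t, t ≤ d → initAvg lam a 0 t = (L t + A t) / t := by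
    intro t ht
    have e1 : (∑ i : Fin d, if 0 ≤ (i : ℕ) ∧ (i : ℕ) < t then lam i else 0) = L t := by
      simp only [Nat.zero_le, true_and]
      exact sum_fin_ite_lt lam lam' hlam'v t ht
    have e2 : (∑ i : Fin k, if 0 ≤ (i : ℕ) ∧ (i : ℕ) < t then a i else 0) = A t := by
      simp only [Nat.zero_le, true_and]
      exact sum_fin_ite_lt a a' ha'v t (le_trans ht hdk)
    unfold initAvg
    rw [e1, e2]
    norm_num
  set P : ℝ := initAvg lam a 0 m with hP
  have hmR : (0:ℝ) < (m:ℝ) := by exact_mod_cast hm1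
  have hPm : (m : ℝ) * P = L m + A m := by
    rw [hP, hinit m hmd, mul_div_cancel₀ _ (ne_of_gt hmR)]
  set x : Fin m → ℝ := fun i => a (Fin.castLE (le_trans hmd hdk) i) with hx
  set y : Fin m → ℝ := fun i => P - lam (Fin.castLE hmd i) with hy
  have hxa : Antitone x := fun i j hij =>
    ha_mono (show Fin.castLE (le_trans hmd hdk) i ≤ Fin.castLE (le_trans hmd hdk) j from hij)
  have hya : Antitone y := fun i j hij =>
    sub_le_sub_left (hlam (show Fin.castLE hmd i ≤ Fin.castLE hmd j from hij)) P
  have hsx : sortDesc x = x := sortDesc_eq_of_antitone hxa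
  have hsy : sortDesc y = y := sortDesc_eq_of_antitone hya
  -- Iic sums
  have hIic : ∀ (f : Fin m → ℝ) (j : Fin m),
      ∑ i ∈ Finset.Iic j, f i = ∑ i : Fin m, if (i : ℕ) < (j : ℕ) + 1 then f i else 0 := by
    intro f j
    rw [← Finset.sum_filter]
    congr 1
    ext i
    simp only [Finset.mem_Iic, Finset.mem_filter, Finset.mem_univ, true_and, Fin.le_def]
    omega
  have hxI : ∀ j : Fin m, ∑ i ∈ Finset.Iic j, x i = A ((j : ℕ) + 1) := by
    intro j
    rw [hIic]
    exact sum_fin_ite_lt x (fun n => a' n)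
      (fun i => ha'v (Fin.castLE (le_trans hmd hdk) i)) _ (by have := j.isLt; omega)
  have hlI : ∀ j : Fin m, ∑ i ∈ Finset.Iic j, lam (Fin.castLE hmd i) = L ((j : ℕ) + 1) := by
    intro j
    rw [hIic]
    exact sum_fin_ite_lt _ (fun n => lam' n)
      (fun i => hlam'v (Fin.castLE hmd i)) _ (by have := j.isLt; omega)
  have hyI : ∀ j : Fin m, ∑ i ∈ Finset.Iic j, y i = ((j : ℕ) + 1 : ℝ) * P - L ((j : ℕ) + 1) := by
    intro j
    have : ∑ i ∈ Finset.Iic j, y i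
        = ∑ i ∈ Finset.Iic j, P - ∑ i ∈ Finset.Iic j, lam (Fin.castLE hmd i) := by
      rw [← Finset.sum_sub_distrib]
    rw [this, hlI, Finset.sum_const, Fin.card_Iic]
    push_cast
    ring_nf
  -- full sums
  have hxS : ∑ i, x i = A m := by
    have := hxI ⟨m - 1, by omega⟩
    have hIm : Finset.Iic (⟨m - 1, by omega⟩ : Fin m) = Finset.univ := by
      ext i; simp [Fin.le_def]; omega
    rw [hIm] at this
    simpa [show m - 1 + 1 = m by omega] using this
  have hyS : ∑ i, y i = (m : ℝ) * P - L m := by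
    have h1 := hyI ⟨m - 1, by omega⟩
    have hIm : Finset.Iic (⟨m - 1, by omega⟩ : Fin m) = Finset.univ := by
      ext i; simp [Fin.le_def]; omega
    rw [hIm] at h1
    have h2 : ((⟨m - 1, by omega⟩ : Fin m) : ℕ) = m - 1 := rfl
    rw [h2, show m - 1 + 1 = m by omega, Nat.cast_sub hm1] at h1
    rw [h1]
    push_cast
    ring
  show MajorizedBy x y ↔ _
  unfold MajorizedBy
  rw [hsx, hsy]
  constructor
  · rintro ⟨hj, _⟩ i hi1 him
    rcases eq_or_lt_of_le him with rfl | hlt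
    · exact le_refl _
    · have hj' := hj ⟨i - 1, by omega⟩
      rw [hxI, hyI] at hj'
      simp only [show i - 1 + 1 = i by omega] at hj'
      rw [Nat.cast_sub hi1] at hj'
      rw [hinit i (by omega)]
      have hiR : (0:ℝ) < (i:ℝ) := by exact_mod_cast hi1
      rw [div_le_iff₀ hiR]
      push_cast at hj'
      nlinarith [hj']
  · intro h
    constructor
    · intro j
      rw [hxI, hyI]
      have hji := h ((j : ℕ) + 1) (by omega) (by omega)
      rw [hinit ((j : ℕ) + 1) (by omega)] at hji
      push_cast at hji
      have hjR : (0:ℝ) < ((j : ℕ) : ℝ) + 1 := by positivity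
      rw [div_le_iff₀ hjR] at hji
      nlinarith [hji]
    · rw [hxS, hyS]; linarith
end
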